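/- arXiv:2403.20258 — 3 statements merged into one kernel-verified Lean document; each statement's English description precedes it below -/
import Mathlib

section
/- Let W be a standard one-dimensional Brownian motion on a probability space (Ω, F, P). Then for every T > 0 and every a > 0, the probability that the running supremum of W stays below the level a over [0, T] equals the Gauss error function evaluated at a/√(2T); that is, P( sup_{0 ≤ t ≤ T} W_t < a ) = erf( a / √(2T) ). -/
open MeasureTheory ProbabilityTheory
open scoped NNReal ENNReal

/-- The Gauss error function `erf z = (2/√π) ∫₀^z e^{-u²} du`. -/
noncomputable def erf (z : ℝ) : ℝ :=
  (2 / Real.sqrt Real.pi) * ∫ u in (0:ℝ)..z, Real.exp (-u ^ 2)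

/-- A standard one-dimensional Brownian motion on a probability space `(Ω, F, P)`:
`W₀ = 0` a.s., a.e. sample path is continuous on `[0,∞)`, `W` has independent
increments, and for `0 ≤ s ≤ t` the increment `W_t - W_s` has law `N(0, t - s)`. -/
structure IsStdBrownianMotion {Ω : Type*} [MeasurableSpace Ω] (P : Measure Ω)
    (W : ℝ → Ω → ℝ) : Prop where
  meas : ∀ t : ℝ, Measurable (W t)
  init : ∀ᵐ ω ∂P, W 0 ω = 0
  cont : ∀ᵐ ω ∂P, ContinuousOn (fun t => W t ω) (Set.Ici (0:ℝ))
  indep_incr : ∀ (n : ℕ) (t : Fin (n + 1) → ℝ), (∀ i, 0 ≤ t i) → Monotone t →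
    iIndepFun
      (fun (i : Fin n) (ω : Ω) => W (t i.succ) ω - W (t i.castSucc) ω) P
  gauss_incr : ∀ s t : ℝ, 0 ≤ s → s ≤ t →
    P.map (fun ω => W t ω - W s ω) = gaussianReal 0 (Real.toNNReal (t - s))

namespace BMRefl

open Set Filter
open scoped Real Topology

variable {Ω : Type*} [MeasurableSpace Ω]

/-- Symmetry of the centered Gaussian measure. -/
lemma gaussianReal_map_neg (v : ℝ≥0) :
    (gaussianReal 0 v).map (fun y : ℝ => -y) = gaussianReal 0 v := by
  have h := gaussianReal_map_const_mul (μ := 0) (v := v) (-1)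
  have h2 : (⟨(-1:ℝ)^2, sq_nonneg _⟩ : ℝ≥0) = 1 := by ext; norm_num
  simp only [h2, one_mul, mul_zero, neg_zero] at h
  simpa [neg_one_mul] using h

/-- The centered Gaussian with positive variance has no atoms. -/
lemma gaussianReal_singleton {v : ℝ≥0} (hv : v ≠ 0) (x : ℝ) :
    gaussianReal 0 v {x} = 0 := by
  rw [gaussianReal_apply _ hv]
  have : (volume : Measure ℝ) {x} = 0 := measure_singleton x
  rw [MeasureTheory.setLIntegral_measure_zero _ _ this]

/-- Crude tail bound for the centered Gaussian. -/
lemma gaussianReal_tail {v : ℝ≥0} (hv : 0 < (v:ℝ)) {ε : ℝ} (hε : 0 < ε) :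
    gaussianReal 0 v (Set.Ioi ε) ≤ ENNReal.ofReal (2 * v * Real.sqrt v / ε ^ 3) := by
  have hv0 : v ≠ 0 := by exact_mod_cast hv.ne'
  rw [gaussianReal_apply_eq_integral 0 hv0]
  apply ENNReal.ofReal_le_ofReal
  set c : ℝ := (Real.sqrt (2 * π * v))⁻¹ with hc
  have hcpos : 0 < c := by rw [hc]; positivity
  set b : ℝ := (2 * (v:ℝ))⁻¹ with hbdef
  have hb : (0:ℝ) < b := by positivity
  set g : ℝ → ℝ := fun x => x * Real.exp (-b * x ^ 2) with hg
  have hint : Integrable g := integrable_mul_exp_neg_mul_sq hb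
  have key : ∫ x in Ioi ε, g x = (v:ℝ) * Real.exp (-b * ε ^ 2) := by
    have hderiv : ∀ x ∈ Ioi ε, HasDerivAt (fun x : ℝ => -(v:ℝ) * Real.exp (-b * x ^ 2)) (g x) x := by
      intro x _
      have h1 : HasDerivAt (fun x : ℝ => -b * x ^ 2) (-b * (2 * x)) x := by
        simpa [mul_comm] using ((hasDerivAt_pow 2 x).const_mul (-b))
      have h2 := (h1.exp).const_mul (-(v:ℝ))
      refine h2.congr_deriv ?_
      rw [hg, hbdef]
      field_simp
    have htend : Tendsto (fun x : ℝ => -(v:ℝ) * Real.exp (-b * x ^ 2)) atTop (𝓝 0) := by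
      have h0 : Tendsto (fun x : ℝ => -b * x ^ 2) atTop atBot := by
        have := (tendsto_pow_atTop (n := 2) (by norm_num) : Tendsto (fun x:ℝ => x^2) atTop atTop)
        exact Tendsto.const_mul_atTop_of_neg (by linarith) this
      have h3 := (Real.tendsto_exp_atBot.comp h0).const_mul (-(v:ℝ))
      simpa using h3
    have hcont : ContinuousWithinAt (fun x : ℝ => -(v:ℝ) * Real.exp (-b * x ^ 2)) (Ici ε) ε :=
      Continuous.continuousWithinAt (by continuity)
    have := integral_Ioi_of_hasDerivAt_of_tendsto hcont hderiv hint.integrableOn htend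
    rw [this]; ring
  have mono : ∫ x in Ioi ε, gaussianPDFReal 0 v x ≤ ∫ x in Ioi ε, c * ε⁻¹ * g x := by
    apply setIntegral_mono_on
    · exact (integrable_gaussianPDFReal 0 v).integrableOn
    · exact (hint.const_mul _).integrableOn
    · exact measurableSet_Ioi
    · intro x hx
      have hx' : ε < x := hx
      unfold ProbabilityTheory.gaussianPDFReal
      have hform : -(x - 0)^2 / (2*(v:ℝ)) = -b * x ^ 2 := by rw [hbdef]; field_simp; ring
      rw [hform, hg]
      have h1 : (1:ℝ) ≤ ε⁻¹ * x := by
        rw [inv_mul_eq_div]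
        exact (one_le_div hε).mpr hx'.le
      calc c * Real.exp (-b * x ^ 2) = c * 1 * Real.exp (-b * x ^ 2) := by ring
        _ ≤ c * (ε⁻¹ * x) * Real.exp (-b * x ^ 2) := by
            apply mul_le_mul_of_nonneg_right _ (Real.exp_nonneg _)
            exact mul_le_mul_of_nonneg_left h1 hcpos.le
        _ = c * ε⁻¹ * (x * Real.exp (-b * x ^ 2)) := by ring
  rw [integral_const_mul] at mono
  refine mono.trans ?_
  rw [key]
  -- final arithmetic
  have hexp : Real.exp (-b * ε ^ 2) ≤ (b * ε ^ 2)⁻¹ := by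
    have hpos : 0 < b * ε ^ 2 := by positivity
    rw [neg_mul, Real.exp_neg]
    apply inv_anti₀ hpos
    linarith [Real.add_one_le_exp (b * ε ^ 2)]
  have hcle : c ≤ (Real.sqrt v)⁻¹ := by
    rw [hc]
    apply inv_anti₀ (Real.sqrt_pos.mpr hv)
    apply Real.sqrt_le_sqrt
    nlinarith [Real.pi_gt_three]
  have hbinv : (b * ε ^ 2)⁻¹ = 2 * (v:ℝ) / ε ^ 2 := by
    rw [hbdef]; field_simp
  calc c * ε⁻¹ * ((v:ℝ) * Real.exp (-b * ε ^ 2))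
      ≤ (Real.sqrt v)⁻¹ * ε⁻¹ * ((v:ℝ) * (2 * (v:ℝ) / ε ^ 2)) := by
        apply mul_le_mul
        · exact mul_le_mul_of_nonneg_right hcle (by positivity)
        · apply mul_le_mul_of_nonneg_left _ hv.le
          exact hexp.trans_eq hbinv
        · positivity
        · positivity
    _ = 2 * v * Real.sqrt v / ε ^ 3 := by
        have hsq : Real.sqrt v * Real.sqrt v = (v:ℝ) := Real.mul_self_sqrt hv.le
        have hspos : 0 < Real.sqrt v := Real.sqrt_pos.mpr hv
        field_simp
        linear_combination (-1 : ℝ) * hsq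


/-- Core reflection step for a product measure with a symmetric second factor. -/
lemma prod_reflect {γ : Type*} [MeasurableSpace γ] (ν : Measure γ) [SFinite ν]
    (ρ : Measure ℝ) [SFinite ρ] (hρ : ρ.map (fun y : ℝ => -y) = ρ)
    {A : Set γ} (hA : MeasurableSet A) {s : γ → ℝ} (hs : Measurable s) (x : ℝ) :
    ν.prod ρ {p : γ × ℝ | p.1 ∈ A ∧ p.2 < x - s p.1}
      = ν.prod ρ {p : γ × ℝ | p.1 ∈ A ∧ s p.1 - x < p.2} := by
  have m1 : MeasurableSet {p : γ × ℝ | p.1 ∈ A ∧ p.2 < x - s p.1} :=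
    (measurable_fst hA).inter
      (measurableSet_lt measurable_snd (measurable_const.sub (hs.comp measurable_fst)))
  have m2 : MeasurableSet {p : γ × ℝ | p.1 ∈ A ∧ s p.1 - x < p.2} :=
    (measurable_fst hA).inter
      (measurableSet_lt ((hs.comp measurable_fst).sub measurable_const) measurable_snd)
  rw [Measure.prod_apply m1, Measure.prod_apply m2]
  refine lintegral_congr fun v => ?_
  by_cases hv : v ∈ A
  · have h1 : Prod.mk v ⁻¹' {p : γ × ℝ | p.1 ∈ A ∧ p.2 < x - s p.1} = Iio (x - s v) := by
      ext y; simp [hv]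
    have h2 : Prod.mk v ⁻¹' {p : γ × ℝ | p.1 ∈ A ∧ s p.1 - x < p.2} = Ioi (s v - x) := by
      ext y; simp [hv]
    rw [h1, h2]
    calc ρ (Iio (x - s v)) = ρ.map (fun y : ℝ => -y) (Iio (x - s v)) := by rw [hρ]
      _ = ρ ((fun y : ℝ => -y) ⁻¹' (Iio (x - s v))) :=
          Measure.map_apply measurable_neg measurableSet_Iio
      _ = ρ (Ioi (s v - x)) := by
          congr 1; ext y
          simp only [mem_preimage, mem_Iio, mem_Ioi]
          constructor <;> intro h <;> linarith
  · have h1 : Prod.mk v ⁻¹' {p : γ × ℝ | p.1 ∈ A ∧ p.2 < x - s p.1} = ∅ := by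
      ext y; simp [hv]
    have h2 : Prod.mk v ⁻¹' {p : γ × ℝ | p.1 ∈ A ∧ s p.1 - x < p.2} = ∅ := by
      ext y; simp [hv]
    rw [h1, h2]


/-- Reflection step using independence. -/
lemma indep_reflect {γ : Type*} [MeasurableSpace γ] {P : Measure Ω} [IsProbabilityMeasure P]
    {G : Ω → γ} {D : Ω → ℝ} (hG : Measurable G) (hD : Measurable D)
    (hind : IndepFun G D P)
    (hsym : (P.map D).map (fun y : ℝ => -y) = P.map D)
    {A : Set γ} (hA : MeasurableSet A) {s : γ → ℝ} (hs : Measurable s) (x : ℝ) :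
    P (G ⁻¹' A ∩ {ω | D ω < x - s (G ω)})
      = P (G ⁻¹' A ∩ {ω | s (G ω) - x < D ω}) := by
  have m1 : MeasurableSet {p : γ × ℝ | p.1 ∈ A ∧ p.2 < x - s p.1} :=
    (measurable_fst hA).inter
      (measurableSet_lt measurable_snd (measurable_const.sub (hs.comp measurable_fst)))
  have m2 : MeasurableSet {p : γ × ℝ | p.1 ∈ A ∧ s p.1 - x < p.2} :=
    (measurable_fst hA).inter
      (measurableSet_lt ((hs.comp measurable_fst).sub measurable_const) measurable_snd)
  have hmap : P.map (fun ω => (G ω, D ω)) = (P.map G).prod (P.map D) :=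
    (indepFun_iff_map_prod_eq_prod_map_map hG.aemeasurable hD.aemeasurable).mp hind
  haveI : IsProbabilityMeasure (P.map G) := Measure.isProbabilityMeasure_map hG.aemeasurable
  haveI : IsProbabilityMeasure (P.map D) := Measure.isProbabilityMeasure_map hD.aemeasurable
  have e1 : G ⁻¹' A ∩ {ω | D ω < x - s (G ω)}
      = (fun ω => (G ω, D ω)) ⁻¹' {p : γ × ℝ | p.1 ∈ A ∧ p.2 < x - s p.1} := rfl
  have e2 : G ⁻¹' A ∩ {ω | s (G ω) - x < D ω}
      = (fun ω => (G ω, D ω)) ⁻¹' {p : γ × ℝ | p.1 ∈ A ∧ s p.1 - x < p.2} := rfl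
  rw [e1, e2, ← Measure.map_apply (hG.prodMk hD) m1, ← Measure.map_apply (hG.prodMk hD) m2,
    hmap]
  exact prod_reflect _ _ hsym hA hs x


/-- Discrete reflection inequalities for partial sums of independent symmetric increments. -/
lemma discrete_reflection {P : Measure Ω} [IsProbabilityMeasure P]
    (X : ℕ → Ω → ℝ) (hXm : ∀ i, Measurable (X i)) (n : ℕ) (hn : 1 ≤ n)
    (hind : iIndepFun (fun i : Fin n => X i) P)
    (hsym : ∀ j, j ≤ n → (P.map (fun ω => ∑ i ∈ Finset.Ico j n, X i ω)).map (fun y : ℝ => -y)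
      = P.map (fun ω => ∑ i ∈ Finset.Ico j n, X i ω))
    {x ε : ℝ} (hx : 0 < x) (hε : 0 < ε) :
    P (⋃ j ∈ Finset.Icc 1 n, {ω | x ≤ ∑ i ∈ Finset.range j, X i ω})
        ≤ P {ω | x ≤ ∑ i ∈ Finset.range n, X i ω}
          + P {ω | x < ∑ i ∈ Finset.range n, X i ω}
      ∧ P {ω | x ≤ ∑ i ∈ Finset.range n, X i ω}
          + P {ω | x + 2*ε < ∑ i ∈ Finset.range n, X i ω}
        ≤ P (⋃ j ∈ Finset.Icc 1 n, {ω | x ≤ ∑ i ∈ Finset.range j, X i ω})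
          + P (⋃ i ∈ Finset.range n, {ω | ε < X i ω}) := by
  classical
  set S : ℕ → Ω → ℝ := fun j ω => ∑ i ∈ Finset.range j, X i ω with hS
  have hSm : ∀ j, Measurable (S j) := fun j => Finset.measurable_sum _ fun i _ => hXm i
  set A : ℕ → Set Ω := fun j =>
    {ω | x ≤ S j ω} ∩ ⋂ l ∈ Finset.range j, {ω | S l ω < x} with hA
  have hAm : ∀ j, MeasurableSet (A j) := fun j =>
    (measurableSet_le measurable_const (hSm j)).inter
      (MeasurableSet.biInter (Finset.range j).countable_toSet
        fun l _ => measurableSet_lt (hSm l) measurable_const)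
  have hAmem : ∀ j ω, ω ∈ A j ↔ (x ≤ S j ω ∧ ∀ l < j, S l ω < x) := by
    intro j ω
    simp [hA, Finset.mem_range]
  -- the events `A j` are pairwise disjoint
  have hkey : ∀ i j : ℕ, i < j → Disjoint (A i) (A j) := by
    intro i j hlt
    refine Set.disjoint_left.mpr fun ω hωi hωj => ?_
    have h1 := ((hAmem i ω).1 hωi).1
    have h2 := ((hAmem j ω).1 hωj).2 i hlt
    linarith
  have hdisjA : (↑(Finset.Icc 1 n) : Set ℕ).PairwiseDisjoint A := by
    intro i _ j _ hij
    rcases lt_or_gt_of_ne hij with h | h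
    · exact hkey i j h
    · exact (hkey j i h).symm
  -- the union of the `A j` is the running-max event
  have hMeq : (⋃ j ∈ Finset.Icc 1 n, {ω | x ≤ S j ω}) = ⋃ j ∈ Finset.Icc 1 n, A j := by
    apply Set.Subset.antisymm
    · intro ω hω
      simp only [Set.mem_iUnion, Finset.mem_Icc, exists_prop] at hω ⊢
      obtain ⟨j, ⟨hj1, hj2⟩, hωj⟩ := hω
      have hex : ∃ m, x ≤ S m ω := ⟨j, hωj⟩
      have hj0 : x ≤ S (Nat.find hex) ω := Nat.find_spec hex
      have hmin : ∀ l < Nat.find hex, S l ω < x := fun l hl =>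
        lt_of_not_ge (Nat.find_min hex hl)
      have hj01 : 1 ≤ Nat.find hex := by
        rcases Nat.eq_zero_or_pos (Nat.find hex) with h0 | h1
        · exfalso
          rw [h0] at hj0
          simp only [hS, Finset.range_zero, Finset.sum_empty] at hj0
          linarith
        · exact h1
      exact ⟨Nat.find hex, ⟨hj01, le_trans (Nat.find_min' hex hωj) hj2⟩,
        (hAmem _ ω).2 ⟨hj0, hmin⟩⟩
    · intro ω hω
      simp only [Set.mem_iUnion, Finset.mem_Icc, exists_prop] at hω ⊢
      obtain ⟨j, hj, hωj⟩ := hω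
      exact ⟨j, hj, ((hAmem j ω).1 hωj).1⟩
  -- reflection identity for each `A j`
  have hrefl : ∀ j, 1 ≤ j → j ≤ n →
      P (A j ∩ {ω | S n ω < x}) = P (A j ∩ {ω | 2 * S j ω - x < S n ω}) := by
    intro j hj1 hj2
    set Sf : Finset (Fin n) := Finset.univ.filter (fun i => (i:ℕ) < j) with hSf
    set Tf : Finset (Fin n) := Finset.univ.filter (fun i => j ≤ (i:ℕ)) with hTf
    have hdisj : Disjoint Sf Tf := by
      rw [Finset.disjoint_left]
      intro i hi hi'
      simp only [hSf, hTf, Finset.mem_filter] at hi hi'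
      omega
    have hindST := hind.indepFun_finset Sf Tf hdisj (fun i => hXm i)
    set G : Ω → ({i // i ∈ Sf} → ℝ) := fun a i => X (i : Fin n) a with hG
    set H : Ω → ({i // i ∈ Tf} → ℝ) := fun a i => X (i : Fin n) a with hH
    have hGm : Measurable G :=
      measurable_pi_lambda _ fun i => hXm _
    have hHm : Measurable H :=
      measurable_pi_lambda _ fun i => hXm _
    set ψ : ({i // i ∈ Tf} → ℝ) → ℝ := fun v => ∑ i, v i with hψ
    have hψm : Measurable ψ := Finset.measurable_sum _ fun i _ => measurable_pi_apply i
    set D : Ω → ℝ := fun ω => ∑ i ∈ Finset.Ico j n, X i ω with hD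
    have hDm : Measurable D := Finset.measurable_sum _ fun i _ => hXm i
    -- bridging sums over `Fin n` subtypes to sums over ranges of naturals
    have hbridge : ∀ (l : ℕ) (a : Ω), l ≤ j →
        (∑ i : {i // i ∈ Sf}, if ((i : Fin n) : ℕ) < l then X ((i : Fin n) : ℕ) a else 0)
          = S l a := by
      intro l a hlj
      have hln : l ≤ n := le_trans hlj hj2
      rw [Finset.sum_coe_sort Sf (fun i => if ((i : Fin n) : ℕ) < l then X ((i : Fin n) : ℕ) a else 0)]
      rw [hSf, Finset.sum_filter]
      rw [Fin.sum_univ_eq_sum_range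
        (fun m => if m < j then (if m < l then X m a else 0) else 0) n]
      have hcong : ∀ m ∈ Finset.range n,
          (if m < j then (if m < l then X m a else 0) else 0) = if m < l then X m a else 0 := by
        intro m _
        split_ifs <;> first | rfl | omega
      rw [Finset.sum_congr rfl hcong, ← Finset.sum_filter]
      have hfr : (Finset.range n).filter (fun m => m < l) = Finset.range l := by
        ext m
        simp only [Finset.mem_filter, Finset.mem_range]
        omega
      rw [hfr]
    have hDeq : ∀ a, ψ (H a) = D a := by
      intro a
      show (∑ i : {i // i ∈ Tf}, X ((i : Fin n) : ℕ) a) = _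
      rw [Finset.sum_coe_sort Tf (fun i => X ((i : Fin n) : ℕ) a)]
      rw [hTf, Finset.sum_filter]
      rw [Fin.sum_univ_eq_sum_range (fun m => if j ≤ m then X m a else 0) n]
      rw [← Finset.sum_filter]
      have hfr : (Finset.range n).filter (fun m => j ≤ m) = Finset.Ico j n := by
        ext m
        simp only [Finset.mem_filter, Finset.mem_range, Finset.mem_Ico]
        omega
      rw [hfr, hD]
    have hindGD : IndepFun G D P := by
      have h := hindST.comp measurable_id hψm
      have : (ψ ∘ fun a (i : {i // i ∈ Tf}) => X (i : Fin n) a) = D := funext hDeq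
      rw [← this]
      exact h
    set sl : ℕ → ({i // i ∈ Sf} → ℝ) → ℝ := fun l v =>
      ∑ i : {i // i ∈ Sf}, if ((i : Fin n) : ℕ) < l then v i else 0 with hsl
    have hslm : ∀ l, Measurable (sl l) := by
      intro l
      apply Finset.measurable_sum
      intro i _
      split_ifs
      · exact measurable_pi_apply i
      · exact measurable_const
    have hslG : ∀ l, l ≤ j → ∀ a, sl l (G a) = S l a := by
      intro l hl a
      exact hbridge l a hl
    set Aset : Set ({i // i ∈ Sf} → ℝ) :=
      {v | x ≤ sl j v} ∩ ⋂ l ∈ Finset.range j, {v | sl l v < x} with hAset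
    have hAsetm : MeasurableSet Aset :=
      (measurableSet_le measurable_const (hslm j)).inter
        (MeasurableSet.biInter (Finset.range j).countable_toSet
          fun l _ => measurableSet_lt (hslm l) measurable_const)
    have hGA : G ⁻¹' Aset = A j := by
      ext a
      simp only [hAset, hA, Set.mem_preimage, Set.mem_inter_iff, Set.mem_setOf_eq,
        Set.mem_iInter, Finset.mem_range]
      constructor
      · rintro ⟨h1, h2⟩
        exact ⟨by rwa [hslG j le_rfl a] at h1, fun l hl => by
          have := h2 l hl; rwa [hslG l hl.le a] at this⟩
      · rintro ⟨h1, h2⟩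
        exact ⟨by rwa [hslG j le_rfl a], fun l hl => by
          have := h2 l hl; rwa [hslG l hl.le a]⟩
    have key := indep_reflect hGm hDm hindGD (hsym j hj2) hAsetm (hslm j) x
    have hDval : ∀ ω, D ω = S n ω - S j ω := by
      intro ω
      simp only [hD, hS]
      exact Finset.sum_Ico_eq_sub _ hj2
    have e1 : G ⁻¹' Aset ∩ {ω | D ω < x - sl j (G ω)} = A j ∩ {ω | S n ω < x} := by
      rw [hGA]
      ext ω
      simp only [Set.mem_inter_iff, Set.mem_setOf_eq]
      constructor
      · rintro ⟨h1, h2⟩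
        rw [hDval ω, hslG j le_rfl ω] at h2
        exact ⟨h1, by linarith⟩
      · rintro ⟨h1, h2⟩
        refine ⟨h1, ?_⟩
        rw [hDval ω, hslG j le_rfl ω]
        linarith
    have e2 : G ⁻¹' Aset ∩ {ω | sl j (G ω) - x < D ω} = A j ∩ {ω | 2 * S j ω - x < S n ω} := by
      rw [hGA]
      ext ω
      simp only [Set.mem_inter_iff, Set.mem_setOf_eq]
      constructor
      · rintro ⟨h1, h2⟩
        rw [hDval ω, hslG j le_rfl ω] at h2
        exact ⟨h1, by linarith⟩
      · rintro ⟨h1, h2⟩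
        refine ⟨h1, ?_⟩
        rw [hDval ω, hslG j le_rfl ω]
        linarith
    rw [e1, e2] at key
    exact key
  -- decomposition of P(A j)
  have hmeaslt : MeasurableSet {ω | S n ω < x} := measurableSet_lt (hSm n) measurable_const
  have hsplit : ∀ j, P (A j) = P (A j ∩ {ω | S n ω < x}) + P (A j ∩ {ω | x ≤ S n ω}) := by
    intro j
    have h := measure_inter_add_diff (μ := P) (A j) hmeaslt
    have hdiff : A j \ {ω | S n ω < x} = A j ∩ {ω | x ≤ S n ω} := by
      ext ω
      simp [Set.mem_diff, not_lt]
    rw [hdiff] at h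
    exact h.symm
  -- summation over the partition
  have hsum : ∀ (C : Set Ω), MeasurableSet C →
      P ((⋃ j ∈ Finset.Icc 1 n, A j) ∩ C) = ∑ j ∈ Finset.Icc 1 n, P (A j ∩ C) := by
    intro C hC
    rw [Set.iUnion₂_inter]
    exact measure_biUnion_finset
      (fun i hi j hj hij => ((hdisjA hi hj hij).mono Set.inter_subset_left
        Set.inter_subset_left))
      (fun j _ => (hAm j).inter hC)
  rw [hMeq]
  have hPM : P (⋃ j ∈ Finset.Icc 1 n, A j) = ∑ j ∈ Finset.Icc 1 n, P (A j) :=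
    measure_biUnion_finset hdisjA (fun j _ => hAm j)
  have hmeasle : MeasurableSet {ω | x ≤ S n ω} := measurableSet_le measurable_const (hSm n)
  have hmeaslt2 : MeasurableSet {ω | x < S n ω} := measurableSet_lt measurable_const (hSm n)
  have hmeaslt3 : MeasurableSet {ω | x + 2*ε < S n ω} :=
    measurableSet_lt measurable_const (hSm n)
  have hsubM : {ω | x ≤ S n ω} ⊆ ⋃ j ∈ Finset.Icc 1 n, A j := by
    rw [← hMeq]
    intro ω hω
    exact Set.mem_iUnion₂.mpr ⟨n, Finset.mem_Icc.mpr ⟨hn, le_rfl⟩, hω⟩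
  constructor
  · -- upper bound
    rw [hPM]
    have hterm : ∀ j ∈ Finset.Icc 1 n,
        P (A j) ≤ P (A j ∩ {ω | x < S n ω}) + P (A j ∩ {ω | x ≤ S n ω}) := by
      intro j hj
      rw [Finset.mem_Icc] at hj
      rw [hsplit j]
      apply add_le_add_left
      rw [hrefl j hj.1 hj.2]
      apply measure_mono
      rintro ω ⟨h1, h2⟩
      refine ⟨h1, ?_⟩
      have h3 := ((hAmem j ω).1 h1).1
      simp only [Set.mem_setOf_eq] at h2 ⊢
      linarith
    calc ∑ j ∈ Finset.Icc 1 n, P (A j)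
        ≤ ∑ j ∈ Finset.Icc 1 n, (P (A j ∩ {ω | x < S n ω}) + P (A j ∩ {ω | x ≤ S n ω})) :=
          Finset.sum_le_sum hterm
      _ = (∑ j ∈ Finset.Icc 1 n, P (A j ∩ {ω | x < S n ω}))
          + ∑ j ∈ Finset.Icc 1 n, P (A j ∩ {ω | x ≤ S n ω}) := Finset.sum_add_distrib
      _ ≤ P {ω | x < S n ω} + P {ω | x ≤ S n ω} := by
          apply add_le_add
          · rw [← hsum _ hmeaslt2]
            exact measure_mono Set.inter_subset_right
          · rw [← hsum _ hmeasle]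
            exact measure_mono Set.inter_subset_right
      _ = P {ω | x ≤ S n ω} + P {ω | x < S n ω} := add_comm _ _
  · -- lower bound
    set C : Set Ω := ⋂ i ∈ Finset.range n, {ω | X i ω ≤ ε} with hC
    have hCm : MeasurableSet C := MeasurableSet.biInter (Finset.range n).countable_toSet
      (fun i _ => measurableSet_le (hXm i) measurable_const)
    have hCc : Cᶜ = ⋃ i ∈ Finset.range n, {ω | ε < X i ω} := by
      ext ω
      simp [hC, not_le]
    have h1 : P {ω | x ≤ S n ω} = ∑ j ∈ Finset.Icc 1 n, P (A j ∩ {ω | x ≤ S n ω}) := by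
      rw [← hsum _ hmeasle, Set.inter_eq_right.mpr hsubM]
    have h2 : P {ω | x + 2*ε < S n ω}
        ≤ (∑ j ∈ Finset.Icc 1 n, P (A j ∩ {ω | S n ω < x})) + P Cᶜ := by
      have hsub2 : {ω | x + 2*ε < S n ω}
          ⊆ ((⋃ j ∈ Finset.Icc 1 n, A j) ∩ ({ω | x + 2*ε < S n ω} ∩ C)) ∪ Cᶜ := by
        intro ω hω
        by_cases hc : ω ∈ C
        · left
          refine ⟨hsubM ?_, hω, hc⟩
          have hω' : x + 2*ε < S n ω := hω
          show x ≤ S n ω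
          linarith
        · right; exact hc
      have step1 : P {ω | x + 2*ε < S n ω}
          ≤ P ((⋃ j ∈ Finset.Icc 1 n, A j) ∩ ({ω | x + 2*ε < S n ω} ∩ C)) + P Cᶜ :=
        le_trans (measure_mono hsub2) (measure_union_le _ _)
      have step2 : P ((⋃ j ∈ Finset.Icc 1 n, A j) ∩ ({ω | x + 2*ε < S n ω} ∩ C))
          = ∑ j ∈ Finset.Icc 1 n, P (A j ∩ ({ω | x + 2*ε < S n ω} ∩ C)) :=
        hsum _ (hmeaslt3.inter hCm)
      have step3 : ∀ j ∈ Finset.Icc 1 n,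
          P (A j ∩ ({ω | x + 2*ε < S n ω} ∩ C)) ≤ P (A j ∩ {ω | S n ω < x}) := by
        intro j hj
        rw [Finset.mem_Icc] at hj
        rw [hrefl j hj.1 hj.2]
        apply measure_mono
        rintro ω ⟨hAj, hSn, hc⟩
        have hmem := (hAmem j ω).1 hAj
        have hjm1 : j - 1 < n := by omega
        have hXle : X (j-1) ω ≤ ε := by
          have := Set.mem_iInter₂.1 hc (j-1) (Finset.mem_range.mpr hjm1)
          exact this
        have hSj : S j ω = S (j-1) ω + X (j-1) ω := by
          have hj' : j - 1 + 1 = j := Nat.succ_pred_eq_of_pos hj.1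
          calc S j ω = S (j-1+1) ω := by rw [hj']
            _ = S (j-1) ω + X (j-1) ω := Finset.sum_range_succ _ _
        have hSjm1 : S (j-1) ω < x := hmem.2 (j-1) (by omega)
        have hSn' : x + 2*ε < S n ω := hSn
        refine ⟨hAj, ?_⟩
        show 2 * S j ω - x < S n ω
        linarith
      calc P {ω | x + 2*ε < S n ω}
          ≤ P ((⋃ j ∈ Finset.Icc 1 n, A j) ∩ ({ω | x + 2*ε < S n ω} ∩ C)) + P Cᶜ := step1
        _ = (∑ j ∈ Finset.Icc 1 n, P (A j ∩ ({ω | x + 2*ε < S n ω} ∩ C))) + P Cᶜ := by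
            rw [step2]
        _ ≤ (∑ j ∈ Finset.Icc 1 n, P (A j ∩ {ω | S n ω < x})) + P Cᶜ :=
            add_le_add_left (Finset.sum_le_sum step3) _
    rw [hPM, ← hCc]
    calc P {ω | x ≤ S n ω} + P {ω | x + 2*ε < S n ω}
        = (∑ j ∈ Finset.Icc 1 n, P (A j ∩ {ω | x ≤ S n ω})) + P {ω | x + 2*ε < S n ω} := by
          rw [h1]
      _ ≤ (∑ j ∈ Finset.Icc 1 n, P (A j ∩ {ω | x ≤ S n ω}))
          + ((∑ j ∈ Finset.Icc 1 n, P (A j ∩ {ω | S n ω < x})) + P Cᶜ) :=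
          add_le_add_right h2 _
      _ = (∑ j ∈ Finset.Icc 1 n,
            (P (A j ∩ {ω | S n ω < x}) + P (A j ∩ {ω | x ≤ S n ω}))) + P Cᶜ := by
          rw [Finset.sum_add_distrib]
          ring
      _ = (∑ j ∈ Finset.Icc 1 n, P (A j)) + P Cᶜ := by
          congr 1
          exact Finset.sum_congr rfl fun j _ => (hsplit j).symm

lemma gaussian_final {T a : ℝ} (hT : 0 < T) (ha : 0 < a) :
    1 - 2 * gaussianReal 0 T.toNNReal (Set.Ioi a)
      = ENNReal.ofReal (erf (a / Real.sqrt (2*T))) := by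
  set v : ℝ≥0 := T.toNNReal with hv
  have hv0 : v ≠ 0 := by
    simp [hv, Real.toNNReal_eq_zero, not_le, hT]
  have hvT : (v : ℝ) = T := Real.coe_toNNReal _ hT.le
  set γ := gaussianReal 0 v with hγ
  haveI : IsProbabilityMeasure γ := by rw [hγ]; infer_instance
  -- symmetry
  have hsymm : γ (Set.Iio (-a)) = γ (Set.Ioi a) := by
    conv_lhs => rw [hγ, ← gaussianReal_map_neg v]
    rw [Measure.map_apply measurable_neg measurableSet_Iio]
    congr 1
    ext y
    simp only [Set.mem_preimage, Set.mem_Iio, Set.mem_Ioi]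
    constructor <;> intro h <;> linarith
  -- partition of ℝ
  have hpart : γ (Set.Icc (-a) a) + 2 * γ (Set.Ioi a) = 1 := by
    have hd1 : Disjoint (Set.Iio (-a)) (Set.Icc (-a) a) := by
      rw [Set.disjoint_left]; intro y hy hy'; exact absurd hy'.1 (not_le.mpr hy)
    have hd2 : Disjoint (Set.Iio (-a) ∪ Set.Icc (-a) a) (Set.Ioi a) := by
      rw [Set.disjoint_left]; rintro y (hy | hy) hy'
      · simp only [Set.mem_Iio] at hy
        simp only [Set.mem_Ioi] at hy'
        linarith
      · simp only [Set.mem_Icc] at hy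
        simp only [Set.mem_Ioi] at hy'
        linarith
    have huniv : (Set.Iio (-a) ∪ Set.Icc (-a) a) ∪ Set.Ioi a = Set.univ := by
      ext y
      simp only [Set.mem_union, Set.mem_Iio, Set.mem_Icc, Set.mem_Ioi, Set.mem_univ, iff_true]
      by_cases h1 : y < -a
      · tauto
      · by_cases h2 : y ≤ a
        · left; right; exact ⟨not_lt.mp h1, h2⟩
        · right; linarith
    have := measure_union (μ := γ) hd2 measurableSet_Ioi
    rw [huniv, measure_univ] at this
    rw [measure_union hd1 measurableSet_Icc] at this
    rw [hsymm] at this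
    rw [this]
    ring
  rw [← hpart]
  have h2fin : (2 : ℝ≥0∞) * γ (Set.Ioi a) ≠ ⊤ := by
    apply ENNReal.mul_ne_top (by norm_num)
    exact (measure_lt_top γ _).ne
  rw [ENNReal.add_sub_cancel_right h2fin]
  -- now the integral computation
  rw [hγ, gaussianReal_apply_eq_integral 0 hv0]
  congr 1
  rw [MeasureTheory.integral_Icc_eq_integral_Ioc, ← intervalIntegral.integral_of_le (by linarith : -a ≤ a)]
  unfold ProbabilityTheory.gaussianPDFReal
  set s : ℝ := Real.sqrt (2 * T) with hs
  have hspos : 0 < s := Real.sqrt_pos.mpr (by linarith)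
  set c : ℝ := (Real.sqrt (2 * π * v))⁻¹ with hc
  have hform : ∀ x : ℝ, c * Real.exp (-(x - 0)^2 / (2 * v)) = c * Real.exp (-(x/s)^2) := by
    intro x
    congr 2
    rw [hvT, hs, div_pow, Real.sq_sqrt (by linarith : (0:ℝ) ≤ 2*T)]
    field_simp
    ring
  simp_rw [hform]
  rw [intervalIntegral.integral_comp_div (f := fun u => c * Real.exp (-u^2)) hspos.ne']
  set z : ℝ := a / s with hzdef
  have hneg : (-a) / s = -z := by rw [neg_div, hzdef]
  rw [hneg]
  -- split and use evenness
  have hgint : ∀ u v : ℝ, IntervalIntegrable (fun u => c * Real.exp (-u^2)) volume u v :=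
    fun u v => (Continuous.intervalIntegrable (by continuity)) _ _
  have heven : ∫ u in (-z)..(0:ℝ), c * Real.exp (-u^2) = ∫ u in (0:ℝ)..z, c * Real.exp (-u^2) := by
    have h := intervalIntegral.integral_comp_neg (a := (0:ℝ)) (b := z)
      (f := fun u => c * Real.exp (-u^2))
    simp only [neg_zero, neg_neg, neg_sq] at h ⊢
    rw [← h]
  have hsplit : ∫ u in (-z)..z, c * Real.exp (-u^2)
      = (∫ u in (-z)..(0:ℝ), c * Real.exp (-u^2)) + ∫ u in (0:ℝ)..z, c * Real.exp (-u^2) :=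
    (intervalIntegral.integral_add_adjacent_intervals (hgint _ _) (hgint _ _)).symm
  rw [hsplit, heven, smul_eq_mul]
  rw [intervalIntegral.integral_const_mul]
  unfold erf
  have hsc : s * c = (Real.sqrt π)⁻¹ := by
    rw [hc, hvT, hs]
    rw [show 2 * π * T = π * (2 * T) by ring, Real.sqrt_mul Real.pi_nonneg]
    rw [mul_inv]
    rw [← mul_assoc, mul_comm (Real.sqrt (2*T))]
    rw [mul_assoc, mul_inv_cancel₀ hspos.ne', mul_one]
  calc s * ((c * ∫ u in (0:ℝ)..z, Real.exp (-u^2)) + c * ∫ u in (0:ℝ)..z, Real.exp (-u^2))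
      = (s * c) * (2 * ∫ u in (0:ℝ)..z, Real.exp (-u^2)) := by ring
    _ = 2 / Real.sqrt π * ∫ u in (0:ℝ)..z, Real.exp (-u ^ 2) := by
        rw [hsc]; ring

end BMRefl

/-- Level crossing: `P(sup_{0 ≤ t ≤ T} W_t < a) = erf(a / √(2T))`. -/
theorem brownian_running_sup_lt_level {Ω : Type*} [MeasurableSpace Ω]
    (P : Measure Ω) [IsProbabilityMeasure P] (W : ℝ → Ω → ℝ)
    (hW : IsStdBrownianMotion P W) (T a : ℝ) (hT : 0 < T) (ha : 0 < a) :
    P {ω | (⨆ t : Set.Icc (0:ℝ) T, W t ω) < a}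
      = ENNReal.ofReal (erf (a / Real.sqrt (2 * T))) := by
  classical
  obtain ⟨hWm, hW0, hWc, hWi, hWg⟩ := hW
  set δ : ℕ → ℝ := fun k => T / 2^k with hδ
  have hδpos : ∀ k, 0 < δ k := fun k => by rw [hδ]; positivity
  set X : ℕ → ℕ → Ω → ℝ :=
    fun k i ω => W (((i+1 : ℕ) : ℝ) * δ k) ω - W (((i : ℕ) : ℝ) * δ k) ω with hX
  have hXm : ∀ k i, Measurable (X k i) := fun k i => (hWm _).sub (hWm _)
  have htel : ∀ k j ω, ∑ i ∈ Finset.range j, X k i ω = W ((j : ℝ) * δ k) ω - W 0 ω := by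
    intro k j ω
    have h := Finset.sum_range_sub (f := fun m : ℕ => W ((m : ℝ) * δ k) ω) j
    simp only [Nat.cast_zero, zero_mul] at h
    exact h
  have hTk : ∀ k, ((2^k : ℕ) : ℝ) * δ k = T := by
    intro k
    rw [hδ]
    push_cast
    field_simp
  have hjT : ∀ k (j : ℕ), j ≤ 2^k → (j : ℝ) * δ k ≤ T := by
    intro k j hj
    rw [← hTk k]
    apply mul_le_mul_of_nonneg_right _ (hδpos k).le
    exact_mod_cast hj
  -- independence of grid increments
  have hind : ∀ k, iIndepFun
      (fun i : Fin (2^k) => X k (i : ℕ)) P := by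
    intro k
    have h := hWi (2^k) (fun i : Fin (2^k+1) => (i : ℝ) * δ k)
      (fun i => by positivity)
      (fun i j hij => by
        apply mul_le_mul_of_nonneg_right _ (hδpos k).le
        exact_mod_cast hij)
    have heq : (fun (i : Fin (2^k)) (ω : Ω) =>
        W ((i.succ : ℝ) * δ k) ω - W ((i.castSucc : ℝ) * δ k) ω)
        = fun (i : Fin (2^k)) => X k (i : ℕ) := by
      funext i ω
      rw [hX]
      simp only [Fin.val_succ, Fin.coe_castSucc]
    rw [heq] at h
    exact h
  -- symmetry of tail sums
  have hsym : ∀ k j, j ≤ 2^k →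
      (P.map (fun ω => ∑ i ∈ Finset.Ico j (2^k), X k i ω)).map (fun y : ℝ => -y)
        = P.map (fun ω => ∑ i ∈ Finset.Ico j (2^k), X k i ω) := by
    intro k j hj
    have hfun : (fun ω => ∑ i ∈ Finset.Ico j (2^k), X k i ω)
        = fun ω => W T ω - W ((j:ℝ) * δ k) ω := by
      funext ω
      rw [Finset.sum_Ico_eq_sub _ hj, htel, htel]
      rw [show (((2:ℕ)^k : ℕ) : ℝ) * δ k = T from hTk k]
      ring
    rw [hfun, hWg ((j:ℝ) * δ k) T (by positivity) (hjT k j hj)]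
    exact BMRefl.gaussianReal_map_neg _
  set γ : Measure ℝ := gaussianReal 0 T.toNNReal with hγ
  haveI : IsProbabilityMeasure γ := by rw [hγ]; infer_instance
  have hT0 : T.toNNReal ≠ 0 := by
    simp [Real.toNNReal_eq_zero, not_le, hT]
  -- distribution of the endpoint sum
  have hmapn : ∀ k, P.map (fun ω => ∑ i ∈ Finset.range (2^k), X k i ω) = γ := by
    intro k
    have hfun : (fun ω => ∑ i ∈ Finset.range (2^k), X k i ω)
        = fun ω => W T ω - W 0 ω := by
      funext ω
      rw [htel]
      rw [show (((2:ℕ)^k : ℕ) : ℝ) * δ k = T from hTk k]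
    rw [hfun, hWg 0 T le_rfl hT.le, hγ, sub_zero]
  have hsummeas : ∀ k, Measurable (fun ω => ∑ i ∈ Finset.range (2^k), X k i ω) :=
    fun k => Finset.measurable_sum _ fun i _ => hXm k i
  have hPle : ∀ k y, P {ω | y ≤ ∑ i ∈ Finset.range (2^k), X k i ω} = γ (Set.Ici y) := by
    intro k y
    rw [← hmapn k, Measure.map_apply (hsummeas k) measurableSet_Ici]
    rfl
  have hPlt : ∀ k y, P {ω | y < ∑ i ∈ Finset.range (2^k), X k i ω} = γ (Set.Ioi y) := by
    intro k y
    rw [← hmapn k, Measure.map_apply (hsummeas k) measurableSet_Ioi]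
    rfl
  have hIci : ∀ y : ℝ, γ (Set.Ici y) = γ (Set.Ioi y) := by
    intro y
    apply le_antisymm
    · have hsub : Set.Ici y ⊆ {y} ∪ Set.Ioi y := by
        intro z hz
        rcases eq_or_lt_of_le (Set.mem_Ici.mp hz) with h | h
        · left; exact Set.mem_singleton_iff.mpr h.symm
        · right; exact h
      calc γ (Set.Ici y) ≤ γ ({y} ∪ Set.Ioi y) := measure_mono hsub
        _ ≤ γ {y} + γ (Set.Ioi y) := measure_union_le _ _
        _ = γ (Set.Ioi y) := by
            rw [hγ, BMRefl.gaussianReal_singleton hT0, zero_add]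
    · exact measure_mono Set.Ioi_subset_Ici_self
  -- dyadic running-max events
  set Mev : ℕ → ℝ → Set Ω := fun k x =>
    ⋃ j ∈ Finset.Icc 1 (2^k), {ω | x ≤ ∑ i ∈ Finset.range j, X k i ω} with hMev
  have hMevm : ∀ k x, MeasurableSet (Mev k x) := by
    intro k x
    apply MeasurableSet.biUnion (Finset.Icc 1 (2^k)).countable_toSet
    intro j _
    exact measurableSet_le measurable_const (Finset.measurable_sum _ fun i _ => hXm k i)
  have hMevMono : ∀ x, Monotone (fun k => Mev k x) := by
    intro x
    apply monotone_nat_of_le_succ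
    intro k ω hω
    simp only [hMev, Set.mem_iUnion, Finset.mem_Icc, exists_prop, Set.mem_setOf_eq] at hω ⊢
    obtain ⟨j, ⟨hj1, hj2⟩, hωj⟩ := hω
    have hp : (2:ℕ)^(k+1) = 2 * 2^k := by rw [pow_succ]; ring
    refine ⟨2*j, ⟨by omega, by omega⟩, ?_⟩
    rw [htel] at hωj ⊢
    have harith : ((2*j : ℕ) : ℝ) * δ (k+1) = (j:ℝ) * δ k := by
      rw [hδ]
      push_cast
      have h2 : (2:ℝ)^(k+1) = 2 * 2^k := by rw [pow_succ]; ring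
      rw [h2]
      field_simp
    rw [harith]
    exact hωj
  set Uev : ℝ → Set Ω := fun x => ⋃ k, Mev k x with hUev
  have hUevm : ∀ x, MeasurableSet (Uev x) := fun x => MeasurableSet.iUnion fun k => hMevm k x
  -- the key identity for the dyadic supremum event
  -- tail bound for single increments
  have htail : ∀ (k : ℕ) (ε : ℝ), 0 < ε →
      P (⋃ i ∈ Finset.range (2^k), {ω | ε < X k i ω})
        ≤ ENNReal.ofReal (2 * T * Real.sqrt (δ k) / ε^3) := by
    intro k ε hε
    have hone : ∀ i, i < 2^k →
        P {ω | ε < X k i ω} ≤ ENNReal.ofReal (2 * δ k * Real.sqrt (δ k) / ε^3) := by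
      intro i _
      have hmap : P.map (X k i) = gaussianReal 0 (δ k).toNNReal := by
        have harith : ((i+1 : ℕ) : ℝ) * δ k - ((i : ℕ) : ℝ) * δ k = δ k := by
          push_cast; ring
        have := hWg (((i : ℕ) : ℝ) * δ k) (((i+1 : ℕ) : ℝ) * δ k)
          (by positivity)
          (by push_cast; nlinarith [hδpos k])
        rw [harith] at this
        exact this
      have hset : {ω | ε < X k i ω} = X k i ⁻¹' Set.Ioi ε := rfl
      rw [hset, ← Measure.map_apply (hXm k i) measurableSet_Ioi, hmap]
      have h1 := BMRefl.gaussianReal_tail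
        (v := (δ k).toNNReal) (by rw [Real.coe_toNNReal _ (hδpos k).le]; exact hδpos k) hε
      rw [Real.coe_toNNReal _ (hδpos k).le] at h1
      exact h1
    calc P (⋃ i ∈ Finset.range (2^k), {ω | ε < X k i ω})
        ≤ ∑ i ∈ Finset.range (2^k), P {ω | ε < X k i ω} :=
          measure_biUnion_finset_le _ _
      _ ≤ ∑ _i ∈ Finset.range (2^k), ENNReal.ofReal (2 * δ k * Real.sqrt (δ k) / ε^3) :=
          Finset.sum_le_sum (fun i hi => hone i (Finset.mem_range.mp hi))
      _ = (2^k : ℕ) * ENNReal.ofReal (2 * δ k * Real.sqrt (δ k) / ε^3) := by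
          rw [Finset.sum_const, Finset.card_range, nsmul_eq_mul]
      _ = ENNReal.ofReal (((2^k : ℕ) : ℝ) * (2 * δ k * Real.sqrt (δ k) / ε^3)) := by
          rw [ENNReal.ofReal_mul (by positivity), ENNReal.ofReal_natCast]
      _ = ENNReal.ofReal (2 * T * Real.sqrt (δ k) / ε^3) := by
          congr 1
          rw [show ((2^k : ℕ) : ℝ) * (2 * δ k * Real.sqrt (δ k) / ε^3)
            = 2 * (((2^k : ℕ) : ℝ) * δ k) * Real.sqrt (δ k) / ε^3 by ring, hTk k]
  -- the tail bound tends to zero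
  have hδ0 : Filter.Tendsto δ Filter.atTop (nhds 0) := by
    have hgeo : Filter.Tendsto (fun k : ℕ => (1/2 : ℝ)^k) Filter.atTop (nhds 0) :=
      tendsto_pow_atTop_nhds_zero_of_lt_one (by norm_num) (by norm_num)
    have heq : δ = fun k => T * (1/2 : ℝ)^k := by
      funext k
      rw [hδ]
      rw [div_pow, one_pow]
      field_simp
    rw [heq]
    have := hgeo.const_mul T
    simpa using this
  have hb0 : ∀ ε : ℝ, 0 < ε → Filter.Tendsto (fun k => 2 * T * Real.sqrt (δ k) / ε^3)
      Filter.atTop (nhds 0) := by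
    intro ε hε
    have hs : Filter.Tendsto (fun k => Real.sqrt (δ k)) Filter.atTop (nhds 0) := by
      have := (Real.continuous_sqrt.tendsto 0).comp hδ0
      simpa [Real.sqrt_zero, Function.comp_def] using this
    have heq : (fun k => 2 * T * Real.sqrt (δ k) / ε^3)
        = fun k => (2 * T / ε^3) * Real.sqrt (δ k) := by
      funext k; ring
    rw [heq]
    have := hs.const_mul (2 * T / ε^3)
    simpa using this
  have hU : ∀ x : ℝ, 0 < x → P (Uev x) = 2 * γ (Set.Ioi x) := by
    intro x hx
    have hmonoU : Monotone (fun k => Mev k x) := hMevMono x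
    have htendU : Filter.Tendsto (fun k => P (Mev k x)) Filter.atTop (nhds (P (Uev x))) := by
      rw [hUev]
      exact tendsto_measure_iUnion_atTop hmonoU
    apply le_antisymm
    · -- upper bound
      have hup : ∀ k, P (Mev k x) ≤ 2 * γ (Set.Ioi x) := by
        intro k
        have h := (BMRefl.discrete_reflection (X k) (hXm k) (2^k) Nat.one_le_two_pow
          (hind k) (hsym k) hx one_pos).1
        rw [hPle, hPlt, hIci] at h
        calc P (Mev k x) ≤ γ (Set.Ioi x) + γ (Set.Ioi x) := h
          _ = 2 * γ (Set.Ioi x) := (two_mul _).symm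
      exact le_of_tendsto htendU (Filter.Eventually.of_forall hup)
    · -- lower bound
      have hge : ∀ ε : ℝ, 0 < ε → γ (Set.Ici x) + γ (Set.Ioi (x + 2*ε)) ≤ P (Uev x) := by
        intro ε hε
        have hk : ∀ k, γ (Set.Ici x) + γ (Set.Ioi (x + 2*ε))
            ≤ P (Uev x) + ENNReal.ofReal (2 * T * Real.sqrt (δ k) / ε^3) := by
          intro k
          have h := (BMRefl.discrete_reflection (X k) (hXm k) (2^k) Nat.one_le_two_pow
            (hind k) (hsym k) hx hε).2
          rw [hPle, hPlt] at h
          refine le_trans h (add_le_add ?_ (htail k ε hε))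
          exact measure_mono (Set.subset_iUnion (fun k => Mev k x) k)
        have htend2 : Filter.Tendsto
            (fun k => P (Uev x) + ENNReal.ofReal (2 * T * Real.sqrt (δ k) / ε^3))
            Filter.atTop (nhds (P (Uev x) + 0)) :=
          Filter.Tendsto.add tendsto_const_nhds
            (by simpa using ENNReal.tendsto_ofReal (hb0 ε hε))
        have := ge_of_tendsto' htend2 hk
        rwa [add_zero] at this
      -- let ε → 0 along 1/(m+1)
      have hm : ∀ m : ℕ, γ (Set.Ici x) + γ (Set.Ioi (x + 2*(1/((m:ℝ)+1)))) ≤ P (Uev x) :=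
        fun m => hge _ (by positivity)
      have hmono2 : Monotone (fun m : ℕ => Set.Ioi (x + 2*(1/((m:ℝ)+1)))) := by
        intro m m' hmm
        apply Set.Ioi_subset_Ioi
        have h2 : ((m:ℝ)+1) ≤ ((m':ℝ)+1) := by
          have : (m:ℝ) ≤ (m':ℝ) := Nat.cast_le.mpr hmm
          linarith
        have := div_le_div_of_nonneg_left (by norm_num : (0:ℝ) ≤ 1)
          (by positivity : (0:ℝ) < (m:ℝ)+1) h2
        linarith
      have hunion : (⋃ m : ℕ, Set.Ioi (x + 2*(1/((m:ℝ)+1)))) = Set.Ioi x := by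
        ext y
        simp only [Set.mem_iUnion, Set.mem_Ioi]
        constructor
        · rintro ⟨m, hm'⟩
          have : 0 < 2*(1/((m:ℝ)+1)) := by positivity
          linarith
        · intro hy
          obtain ⟨m, hm'⟩ := exists_nat_one_div_lt (by linarith : (0:ℝ) < (y - x)/2)
          refine ⟨m, ?_⟩
          have : 2*(1/((m:ℝ)+1)) < y - x := by
            have h3 : (1:ℝ)/((m:ℝ)+1) < (y-x)/2 := hm'
            linarith
          linarith
      have htend3 : Filter.Tendsto (fun m : ℕ => γ (Set.Ioi (x + 2*(1/((m:ℝ)+1)))))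
          Filter.atTop (nhds (γ (Set.Ioi x))) := by
        have := tendsto_measure_iUnion_atTop (μ := γ) hmono2
        rwa [hunion] at this
      have htend4 : Filter.Tendsto
          (fun m : ℕ => γ (Set.Ici x) + γ (Set.Ioi (x + 2*(1/((m:ℝ)+1)))))
          Filter.atTop (nhds (γ (Set.Ici x) + γ (Set.Ioi x))) :=
        Filter.Tendsto.add tendsto_const_nhds htend3
      have := le_of_tendsto htend4 (Filter.Eventually.of_forall hm)
      rwa [hIci, ← two_mul] at this
  -- pass to the level a
  set xseq : ℕ → ℝ := fun m => a - a/(m+2) with hxseq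
  have hxpos : ∀ m, 0 < xseq m := by
    intro m
    rw [hxseq]
    have h1 : a/((m:ℝ)+2) < a := by
      apply div_lt_self ha
      have : (0:ℝ) ≤ (m:ℝ) := Nat.cast_nonneg m
      linarith
    simp only []
    linarith
  have hxlt : ∀ m, xseq m < a := by
    intro m
    rw [hxseq]
    have h1 : 0 < a/((m:ℝ)+2) := by
      apply div_pos ha
      have : (0:ℝ) ≤ (m:ℝ) := Nat.cast_nonneg m
      linarith
    simp only []
    linarith
  have hxmono : Monotone xseq := by
    intro m m' hm
    rw [hxseq]
    simp only []
    have h2 : ((m:ℝ)+2) ≤ ((m':ℝ)+2) := by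
      have : (m:ℝ) ≤ (m':ℝ) := Nat.cast_le.mpr hm
      linarith
    have h3 : a/((m':ℝ)+2) ≤ a/((m:ℝ)+2) :=
      div_le_div_of_nonneg_left ha.le (by positivity : (0:ℝ) < (m:ℝ)+2) h2
    linarith
  have hxtend : Filter.Tendsto xseq Filter.atTop (nhds a) := by
    rw [hxseq]
    have h0 : Filter.Tendsto (fun m : ℕ => a/((m:ℝ)+2)) Filter.atTop (nhds 0) := by
      apply Filter.Tendsto.div_atTop (tendsto_const_nhds)
      apply Filter.tendsto_atTop_add_const_right
      exact tendsto_natCast_atTop_atTop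
    have := (tendsto_const_nhds (x := a) (f := Filter.atTop (α := ℕ))).sub h0
    simpa using this
  set Vev : Set Ω := ⋂ m, Uev (xseq m) with hVev
  have hVevm : MeasurableSet Vev := MeasurableSet.iInter fun m => hUevm _
  have hPV : P Vev = 2 * γ (Set.Ioi a) := by
    have hanti : Antitone (fun m => Uev (xseq m)) := by
      intro m m' hmm ω hω
      simp only [hUev, hMev, Set.mem_iUnion, Finset.mem_Icc, Set.mem_setOf_eq,
        exists_prop] at hω ⊢
      obtain ⟨k, j, hj, hle⟩ := hω
      exact ⟨k, j, hj, le_trans (hxmono hmm) hle⟩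
    have htend1 : Filter.Tendsto (fun m => P (Uev (xseq m))) Filter.atTop (nhds (P Vev)) := by
      rw [hVev]
      exact tendsto_measure_iInter_atTop (fun m => (hUevm _).nullMeasurableSet) hanti
        ⟨0, measure_ne_top P _⟩
    have heq : (fun m => P (Uev (xseq m))) = fun m => 2 * γ (Set.Ioi (xseq m)) :=
      funext fun m => hU _ (hxpos m)
    have hanti2 : Antitone (fun m => Set.Ioi (xseq m)) :=
      fun m m' h => Set.Ioi_subset_Ioi (hxmono h)
    have hint : (⋂ m, Set.Ioi (xseq m)) = Set.Ici a := by
      ext y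
      simp only [Set.mem_iInter, Set.mem_Ioi, Set.mem_Ici]
      constructor
      · intro h
        exact le_of_tendsto hxtend (Filter.Eventually.of_forall fun m => (h m).le)
      · intro h m
        exact lt_of_lt_of_le (hxlt m) h
    have htend2 : Filter.Tendsto (fun m => γ (Set.Ioi (xseq m))) Filter.atTop
        (nhds (γ (Set.Ici a))) := by
      have := tendsto_measure_iInter_atTop (μ := γ)
        (fun m => measurableSet_Ioi.nullMeasurableSet) hanti2 ⟨0, measure_ne_top γ _⟩
      rwa [hint] at this
    have htend2' := ENNReal.Tendsto.const_mul htend2 (Or.inr (by norm_num : (2:ℝ≥0∞) ≠ ⊤))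
    rw [heq] at htend1
    have hfin := tendsto_nhds_unique htend1 htend2'
    rw [hfin, hIci]
  -- almost-everywhere identification of the events
  have hae : ({ω | (⨆ t : Set.Icc (0:ℝ) T, W t ω) < a} : Set Ω) =ᵐ[P] (Vevᶜ : Set Ω) := by
    rw [Filter.eventuallyEq_set]
    filter_upwards [hW0.and hWc] with ω hω
    obtain ⟨h0, hcont⟩ := hω
    show ((⨆ t : Set.Icc (0:ℝ) T, W t ω) < a) ↔ ω ∈ Vevᶜ
    rw [Set.mem_compl_iff, ← not_le]
    apply not_congr
    -- key : a ≤ sup ↔ ω ∈ Vev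
    have hfc : ContinuousOn (fun t => W t ω) (Set.Icc 0 T) :=
      hcont.mono (fun t ht => ht.1)
    obtain ⟨tm, htm, hmax⟩ := isCompact_Icc.exists_isMaxOn
      (Set.nonempty_Icc.mpr hT.le) hfc
    have hbdd : BddAbove (Set.range (fun t : Set.Icc (0:ℝ) T => W (t:ℝ) ω)) := by
      refine ⟨W tm ω, ?_⟩
      rintro y ⟨t, rfl⟩
      exact hmax t.2
    haveI : Nonempty (Set.Icc (0:ℝ) T) := ⟨⟨0, Set.mem_Icc.mpr ⟨le_rfl, hT.le⟩⟩⟩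
    have hsup_le : (⨆ t : Set.Icc (0:ℝ) T, W t ω) ≤ W tm ω :=
      ciSup_le (fun t => hmax t.2)
    have hle_sup : ∀ t : Set.Icc (0:ℝ) T, W (t:ℝ) ω ≤ ⨆ t : Set.Icc (0:ℝ) T, W t ω :=
      fun t => le_ciSup hbdd t
    have hVmem : ω ∈ Vev ↔ ∀ m, ∃ k, ∃ j : ℕ, (1 ≤ j ∧ j ≤ 2^k) ∧ xseq m ≤ W ((j:ℝ) * δ k) ω := by
      rw [hVev]
      simp only [Set.mem_iInter, hUev, hMev, Set.mem_iUnion, Finset.mem_Icc,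
        Set.mem_setOf_eq, exists_prop]
      constructor
      · intro h m
        obtain ⟨k, j, hj, hle⟩ := h m
        rw [htel, h0, sub_zero] at hle
        exact ⟨k, j, hj, hle⟩
      · intro h m
        obtain ⟨k, j, hj, hle⟩ := h m
        refine ⟨k, j, hj, ?_⟩
        rw [htel, h0, sub_zero]
        exact hle
    constructor
    · -- a ≤ sup → ω ∈ Vev
      intro hsup
      apply hVmem.mpr
      intro m
      have hfm : a ≤ W tm ω := le_trans hsup hsup_le
      have htmpos : 0 < tm := by
        rcases lt_or_eq_of_le htm.1 with h | h
        · exact h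
        · exfalso
          rw [← h, h0] at hfm
          linarith
      have hcw : ContinuousWithinAt (fun t => W t ω) (Set.Ici 0) tm := hcont tm htm.1
      rw [Metric.continuousWithinAt_iff] at hcw
      have hη : 0 < a - xseq m := by linarith [hxlt m]
      obtain ⟨d, hd, hball⟩ := hcw (a - xseq m) hη
      obtain ⟨k, hk⟩ := pow_unbounded_of_one_lt (T / min d tm) (by norm_num : (1:ℝ) < 2)
      have hminpos : 0 < min d tm := lt_min hd htmpos
      have hδk : δ k < min d tm := by
        rw [hδ]
        rw [div_lt_iff₀ hminpos] at hk
        rw [div_lt_iff₀ (by positivity : (0:ℝ) < 2^k)]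
        linarith [hk]
      have hδkpos := hδpos k
      have hδktm : δ k < tm := lt_of_lt_of_le hδk (min_le_right _ _)
      have hδkd : δ k < d := lt_of_lt_of_le hδk (min_le_left _ _)
      set j := ⌊tm / δ k⌋₊ with hjdef
      have hj1 : 1 ≤ j := by
        apply Nat.le_floor
        rw [Nat.cast_one, le_div_iff₀ hδkpos, one_mul]
        exact hδktm.le
      have hj2 : j ≤ 2^k := by
        have h1 : tm / δ k ≤ ((2^k : ℕ) : ℝ) := by
          rw [div_le_iff₀ hδkpos]
          calc tm ≤ T := htm.2
            _ = ((2^k : ℕ) : ℝ) * δ k := (hTk k).symm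
        calc j ≤ ⌊((2^k : ℕ) : ℝ)⌋₊ := Nat.floor_le_floor h1
          _ = 2^k := Nat.floor_natCast _
      have hjle : (j:ℝ) * δ k ≤ tm := by
        have := Nat.floor_le (by positivity : (0:ℝ) ≤ tm / δ k)
        calc (j:ℝ) * δ k ≤ (tm / δ k) * δ k :=
            mul_le_mul_of_nonneg_right this hδkpos.le
          _ = tm := by field_simp
      have hjgt : tm - (j:ℝ) * δ k < δ k := by
        have h2 := Nat.lt_floor_add_one (tm / δ k)
        rw [div_lt_iff₀ hδkpos] at h2
        push_cast at h2 ⊢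
        nlinarith
      have hdist : dist ((j:ℝ) * δ k) tm < d := by
        rw [Real.dist_eq, abs_of_nonpos (by linarith), neg_sub]
        linarith
      have hmem : (j:ℝ) * δ k ∈ Set.Ici (0:ℝ) := Set.mem_Ici.mpr (by positivity)
      have hfd := hball hmem hdist
      rw [Real.dist_eq] at hfd
      have h6 := abs_lt.mp hfd
      refine ⟨k, j, ⟨hj1, hj2⟩, ?_⟩
      have h7 := h6.1
      linarith
    · -- ω ∈ Vev → a ≤ sup
      intro hV
      have hstep : ∀ m, xseq m ≤ ⨆ t : Set.Icc (0:ℝ) T, W t ω := by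
        intro m
        obtain ⟨k, j, ⟨hj1, hj2⟩, hle⟩ := (hVmem.mp hV) m
        have htmem : (j:ℝ) * δ k ∈ Set.Icc (0:ℝ) T :=
          Set.mem_Icc.mpr ⟨by positivity, hjT k j hj2⟩
        exact le_trans hle (hle_sup ⟨_, htmem⟩)
      exact le_of_tendsto hxtend (Filter.Eventually.of_forall hstep)
  -- conclusion
  rw [measure_congr hae, measure_compl hVevm (measure_ne_top P _), measure_univ, hPV, hγ]
  exact BMRefl.gaussian_final hT ha
end

section
/- Let W be a standard one-dimensional Brownian motion on a probability space (Ω, F, P), let T > 0, ζ > 0, K > 0, and let g : [0, T] × Ω → ℝ be a stochastic process such that, for almost every ω, there exists τ ∈ [0, T] with g_τ(ω) ≤ −K. Then the probability that the drift-plus-scaled-Brownian process reaches the level 0 from above within [0, T] satisfies P( ∃ t ∈ [0, T], g_t + ζ·W_t ≤ 0 ) ≥ erf( K / (ζ√(2T)) ). -/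
open MeasureTheory ProbabilityTheory

open Real
open scoped NNReal ENNReal

lemma erf_eq_integral (T a : ℝ) (hT : 0 < T) (ha : 0 < a) :
    erf (a / Real.sqrt (2 * T)) = ∫ x in Set.Ioo (-a) a, gaussianPDFReal 0 T.toNNReal x := by
  have hc0 : (0:ℝ) < Real.sqrt (2 * T) := Real.sqrt_pos.mpr (by linarith)
  set c := Real.sqrt (2 * T) with hc
  have hc2 : c ^ 2 = 2 * T := Real.sq_sqrt (by linarith)
  have hcoe : ((T.toNNReal : ℝ)) = T := Real.coe_toNNReal T hT.le
  have hpdf : ∀ x : ℝ, gaussianPDFReal 0 T.toNNReal x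
      = (Real.sqrt (2 * π * T))⁻¹ * Real.exp (-(x / c) ^ 2) := by
    intro x
    rw [gaussianPDFReal]
    rw [hcoe]
    congr 1
    rw [div_pow, hc2]
    ring_nf
  have hInt : ∫ x in Set.Ioo (-a) a, gaussianPDFReal 0 T.toNNReal x
      = ∫ x in (-a)..a, (Real.sqrt (2 * π * T))⁻¹ * Real.exp (-(x / c) ^ 2) := by
    rw [intervalIntegral.integral_of_le (by linarith), integral_Ioc_eq_integral_Ioo]
    simp_rw [hpdf]
  rw [hInt, intervalIntegral.integral_const_mul, intervalIntegral.integral_comp_div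
    (f := fun u => Real.exp (-u ^ 2)) hc0.ne']
  have heven : ∫ u in (-a/c)..(a/c), Real.exp (-u ^ 2)
      = 2 * ∫ u in (0:ℝ)..(a/c), Real.exp (-u ^ 2) := by
    have hi : ∀ x y : ℝ, IntervalIntegrable (fun u => Real.exp (-u ^ 2)) volume x y :=
      fun x y => (Continuous.intervalIntegrable (by continuity) x y)
    have hsplit := intervalIntegral.integral_add_adjacent_intervals
      (a := -a/c) (b := 0) (c := a/c) (hi _ _) (hi _ _)
    have hneg : ∫ u in (-a/c)..(0:ℝ), Real.exp (-u ^ 2)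
        = ∫ u in (0:ℝ)..(a/c), Real.exp (-u ^ 2) := by
      have := intervalIntegral.integral_comp_neg (a := (0:ℝ)) (b := a/c)
        (fun u => Real.exp (-u ^ 2))
      simp only [neg_sq, neg_zero, neg_div] at this ⊢
      rw [← this]
    rw [← hsplit, hneg]
    ring
  rw [heven, erf]
  have hsqrt : Real.sqrt (2 * π * T) = Real.sqrt π * c := by
    rw [hc, ← Real.sqrt_mul pi_pos.le]
    ring_nf
  have hπ : (0:ℝ) < Real.sqrt π := Real.sqrt_pos.mpr pi_pos
  rw [hsqrt]
  rw [smul_eq_mul]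
  field_simp

lemma gauss_neg_symm (v : ℝ≥0) (a : ℝ) :
    gaussianReal 0 v (Set.Iic (-a)) = gaussianReal 0 v (Set.Ici a) := by
  have h := gaussianReal_map_const_mul (μ := 0) (v := v) (-1)
  have h2 : gaussianReal ((-1) * 0) (⟨(-1:ℝ)^2, sq_nonneg _⟩ * v) = gaussianReal 0 v := by
    congr 1
    · norm_num
    · norm_num
      exact one_mul v
  replace h := h.trans h2
  have h3 : gaussianReal 0 v (Set.Ici a) = gaussianReal 0 v (Set.Iic (-a)) := by
    calc gaussianReal 0 v (Set.Ici a) = (gaussianReal 0 v).map ((-1 : ℝ) * ·) (Set.Ici a) := by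
          rw [h]
      _ = gaussianReal 0 v (((-1 : ℝ) * ·) ⁻¹' Set.Ici a) := by
          rw [Measure.map_apply (measurable_const_mul (-1 : ℝ)) measurableSet_Ici]
      _ = gaussianReal 0 v (Set.Iic (-a)) := by
          congr 1
          ext x
          simp only [Set.mem_preimage, Set.mem_Ici, Set.mem_Iic]
          constructor <;> intro hx <;> linarith
  exact h3.symm

lemma gauss_half_le (v : ℝ≥0) : (2 : ℝ≥0∞)⁻¹ ≤ gaussianReal 0 v (Set.Ici 0) := by
  have h1 : (1 : ℝ≥0∞) ≤ 2 * gaussianReal 0 v (Set.Ici 0) := by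
    calc (1:ℝ≥0∞) = gaussianReal 0 v Set.univ := (measure_univ).symm
      _ ≤ gaussianReal 0 v (Set.Iic 0) + gaussianReal 0 v (Set.Ici 0) := by
          rw [← Set.Iic_union_Ici (a := (0:ℝ))]; exact measure_union_le _ _
      _ = 2 * gaussianReal 0 v (Set.Ici 0) := by
          rw [show Set.Iic (0:ℝ) = Set.Iic (-0) by norm_num, gauss_neg_symm]
          ring
  calc (2:ℝ≥0∞)⁻¹ = 2⁻¹ * 1 := (mul_one _).symm
    _ ≤ 2⁻¹ * (2 * gaussianReal 0 v (Set.Ici 0)) := mul_le_mul_right h1 _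
    _ = gaussianReal 0 v (Set.Ici 0) := by
        rw [← mul_assoc, ENNReal.inv_mul_cancel (by norm_num) (by norm_num), one_mul]

lemma erf_add_two_tail_le (T a : ℝ) (hT : 0 < T) (ha : 0 < a) :
    ENNReal.ofReal (erf (a / Real.sqrt (2 * T)))
      + 2 * gaussianReal 0 T.toNNReal (Set.Ici a) ≤ 1 := by
  have hv : T.toNNReal ≠ 0 := by
    simp only [ne_eq, Real.toNNReal_eq_zero, not_le]
    linarith
  set μ := gaussianReal 0 T.toNNReal with hμ
  have h1 : ENNReal.ofReal (erf (a / Real.sqrt (2 * T))) = μ (Set.Ioo (-a) a) := by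
    rw [hμ, gaussianReal_apply_eq_integral 0 hv, erf_eq_integral T a hT ha]
  have d1 : Disjoint (Set.Ici a) (Set.Iic (-a)) := by
    rw [Set.disjoint_left]
    intro x hx hx'
    simp only [Set.mem_Ici, Set.mem_Iic] at *
    linarith
  have d2 : Disjoint (Set.Ioo (-a) a) (Set.Ici a ∪ Set.Iic (-a)) := by
    rw [Set.disjoint_left]
    intro x hx hx'
    simp only [Set.mem_Ioo] at hx
    rcases hx' with h | h
    · simp only [Set.mem_Ici] at h; linarith
    · simp only [Set.mem_Iic] at h; linarith
  calc ENNReal.ofReal (erf (a / Real.sqrt (2 * T))) + 2 * μ (Set.Ici a)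
      = μ (Set.Ioo (-a) a) + (μ (Set.Ici a) + μ (Set.Iic (-a))) := by
        rw [h1, gauss_neg_symm]; ring
    _ = μ (Set.Ioo (-a) a ∪ (Set.Ici a ∪ Set.Iic (-a))) := by
        rw [measure_union d2 (measurableSet_Ici.union measurableSet_Iic),
          measure_union d1 measurableSet_Iic]
    _ ≤ μ Set.univ := measure_mono (Set.subset_univ _)
    _ = 1 := measure_univ

lemma levy {Ω : Type*} [MeasurableSpace Ω] (P : Measure Ω) [IsProbabilityMeasure P]
    (W : ℝ → Ω → ℝ) (hW : IsStdBrownianMotion P W) (n : ℕ) (t : Fin (n+1) → ℝ)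
    (h0 : ∀ i, 0 ≤ t i) (hm : Monotone t) (a : ℝ) :
    P {ω | ∃ i, a < W (t i) ω - W (t 0) ω} ≤
      2 * P {ω | a ≤ W (t (Fin.last n)) ω - W (t 0) ω} := by
  classical
  set D : Fin n → Ω → ℝ := fun i ω => W (t i.succ) ω - W (t i.castSucc) ω with hDdef
  have hD : iIndepFun D P := hW.indep_incr n t h0 hm
  have hDm : ∀ i, Measurable (D i) := fun i => (hW.meas _).sub (hW.meas _)
  set X : Fin (n+1) → Ω → ℝ := fun k ω => W (t k) ω - W (t 0) ω with hXdef
  have hXm : ∀ k, Measurable (X k) := fun k => (hW.meas _).sub (hW.meas _)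
  have hXsum : ∀ (k : Fin (n+1)) (ω : Ω),
      X k ω = ∑ i ∈ Finset.univ.filter (fun i : Fin n => i.castSucc < k), D i ω := by
    intro k
    induction k using Fin.induction with
    | zero =>
      intro ω
      have he : Finset.univ.filter (fun i : Fin n => i.castSucc < 0) = ∅ := by
        ext i; simp [Fin.lt_def]
      simp [he, hXdef]
    | succ k ih =>
      intro ω
      have hset : Finset.univ.filter (fun i : Fin n => i.castSucc < k.succ)
          = insert k (Finset.univ.filter (fun i : Fin n => i.castSucc < k.castSucc)) := by
        ext i
        simp only [Finset.mem_filter, Finset.mem_insert, Finset.mem_univ, true_and,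
          Fin.lt_def, Fin.coe_castSucc, Fin.val_succ]
        rw [Fin.ext_iff]
        omega
      have hk : k ∉ Finset.univ.filter (fun i : Fin n => i.castSucc < k.castSucc) := by
        simp only [Finset.mem_filter, Finset.mem_univ, true_and, lt_self_iff_false,
          not_false_eq_true]
      rw [hset, Finset.sum_insert hk, ← ih ω]
      simp only [hXdef, hDdef]
      ring
  set A : Fin (n+1) → Set Ω :=
    fun k => {ω | (∀ j, j < k → X j ω ≤ a) ∧ a < X k ω} with hAdef
  have hAmeas : ∀ k, MeasurableSet (A k) := by
    intro k
    have : A k = (⋂ j ∈ Set.Iio k, {ω | X j ω ≤ a}) ∩ {ω | a < X k ω} := by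
      ext ω
      simp [hAdef, Set.mem_iInter]
    rw [this]
    exact (MeasurableSet.biInter (Set.to_countable _)
      (fun j _ => measurableSet_le (hXm j) measurable_const)).inter
      (measurableSet_lt measurable_const (hXm k))
  have hU : {ω | ∃ i, a < X i ω} = ⋃ k, A k := by
    ext ω
    simp only [Set.mem_setOf_eq, Set.mem_iUnion]
    constructor
    · rintro ⟨i, hi⟩
      have hne : (Finset.univ.filter (fun j : Fin (n+1) => a < X j ω)).Nonempty :=
        ⟨i, by simp [hi]⟩
      set k := (Finset.univ.filter (fun j : Fin (n+1) => a < X j ω)).min' hne with hk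
      refine ⟨k, ⟨fun j hj => ?_, ?_⟩⟩
      · by_contra hcon
        push_neg at hcon
        have : k ≤ j := Finset.min'_le _ _ (by simp [hcon.le]; exact hcon)
        exact absurd (lt_of_lt_of_le hj this) (lt_irrefl _)
      · have := (Finset.univ.filter (fun j : Fin (n+1) => a < X j ω)).min'_mem hne
        simpa using this
    · rintro ⟨k, _, hk2⟩
      exact ⟨k, hk2⟩
  have hdisj : Pairwise (Function.onFun Disjoint A) := by
    have key : ∀ k k' : Fin (n+1), k < k' → Disjoint (A k) (A k') := by
      intro k k' hlt
      rw [Set.disjoint_left]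
      rintro ω ⟨_, hk2⟩ ⟨hk1', _⟩
      exact absurd hk2 (not_lt.mpr (hk1' k hlt))
    intro k k' hne
    rcases hne.lt_or_gt with h | h
    · exact key _ _ h
    · exact (key _ _ h).symm
  set B : Fin (n+1) → Set Ω :=
    fun k => {ω | 0 ≤ W (t (Fin.last n)) ω - W (t k) ω} with hBdef
  have hBmeas : ∀ k, MeasurableSet (B k) :=
    fun k => measurableSet_le measurable_const ((hW.meas _).sub (hW.meas _))
  have hhalf : ∀ k, (2:ℝ≥0∞)⁻¹ ≤ P (B k) := by
    intro k
    have hmap := hW.gauss_incr (t k) (t (Fin.last n)) (h0 k) (hm (Fin.le_last k))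
    have : P (B k) = (P.map (fun ω => W (t (Fin.last n)) ω - W (t k) ω)) (Set.Ici 0) := by
      rw [Measure.map_apply (f := fun ω => W (t (Fin.last n)) ω - W (t k) ω) ((hW.meas _).sub (hW.meas _)) measurableSet_Ici]
      rfl
    rw [this, hmap]
    exact gauss_half_le _
  have hABsub : ∀ k, A k ∩ B k ⊆ {ω | a ≤ X (Fin.last n) ω} := by
    rintro k ω ⟨⟨_, hk2⟩, hb⟩
    have hb' : 0 ≤ W (t (Fin.last n)) ω - W (t k) ω := hb
    have hk2' : a < W (t k) ω - W (t 0) ω := hk2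
    show a ≤ W (t (Fin.last n)) ω - W (t 0) ω
    linarith
  have hindep : ∀ k, P (A k ∩ B k) = P (A k) * P (B k) := by
    intro k
    set S₁ : Finset (Fin n) := Finset.univ.filter (fun i : Fin n => i.castSucc < k) with hS₁
    set S₂ : Finset (Fin n) := Finset.univ.filter (fun i : Fin n => ¬ i.castSucc < k) with hS₂
    have hdisjS : Disjoint S₁ S₂ := by
      rw [Finset.disjoint_left]
      intro i hi hi'
      rw [hS₁, Finset.mem_filter] at hi
      rw [hS₂, Finset.mem_filter] at hi'
      exact hi'.2 hi.2
    have hIF : IndepFun (fun ω (i : S₁) => D i ω) (fun ω (i : S₂) => D i ω) P :=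
      hD.indepFun_finset S₁ S₂ hdisjS hDm
    have key1 : ∀ (ω : Ω) (j : Fin (n+1)), j ≤ k →
        (∑ i ∈ Finset.univ.filter (fun i : S₁ => (i : Fin n).castSucc < j),
          D (i : Fin n) ω) = X j ω := by
      intro ω j hj
      rw [hXsum j ω, Finset.sum_filter]
      rw [Finset.sum_coe_sort S₁ (fun x : Fin n => if x.castSucc < j then D x ω else 0)]
      rw [← Finset.sum_filter (fun x : Fin n => x.castSucc < j) (fun x => D x ω)]
      rw [hS₁, Finset.filter_filter]
      congr 1
      ext i
      simp only [Finset.mem_filter, Finset.mem_univ, true_and]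
      constructor
      · rintro ⟨-, h⟩; exact h
      · intro h; exact ⟨lt_of_lt_of_le h hj, h⟩
    have key2 : ∀ ω : Ω, (∑ i : S₁, D (i : Fin n) ω) = X k ω := by
      intro ω
      rw [Finset.sum_coe_sort S₁ (fun x => D x ω), hXsum k ω, hS₁]
    have key3 : ∀ ω : Ω, (∑ i : S₂, D (i : Fin n) ω) = W (t (Fin.last n)) ω - W (t k) ω := by
      intro ω
      have hsplit := Finset.sum_filter_add_sum_filter_not Finset.univ
        (fun i : Fin n => i.castSucc < k) (fun i => D i ω)
      have hlastfilter : Finset.univ.filter (fun i : Fin n => i.castSucc < Fin.last n)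
          = Finset.univ := by
        ext i
        simp [Fin.castSucc_lt_last]
      have h1 : X (Fin.last n) ω = ∑ i, D i ω := by
        rw [hXsum (Fin.last n) ω, hlastfilter]
      have h2 : X k ω = ∑ i ∈ S₁, D i ω := by rw [hXsum k ω, hS₁]
      have h3 : W (t (Fin.last n)) ω - W (t k) ω = X (Fin.last n) ω - X k ω := by
        show _ = (W (t (Fin.last n)) ω - W (t 0) ω) - (W (t k) ω - W (t 0) ω)
        ring
      rw [Finset.sum_coe_sort S₂ (fun x => D x ω), hS₂]
      rw [h3, h1, h2]
      rw [hS₁] at *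
      linarith [hsplit]
    set M₁ : Set ((i : S₁) → ℝ) := {v | (∀ j : Fin (n+1), j < k →
        (∑ i ∈ Finset.univ.filter (fun i : S₁ => (i : Fin n).castSucc < j), v i) ≤ a)
        ∧ a < ∑ i, v i} with hM₁
    set M₂ : Set ((i : S₂) → ℝ) := {v | 0 ≤ ∑ i, v i} with hM₂
    have hsm : ∀ (s : Finset {x // x ∈ S₁}), Measurable (fun v : (i : S₁) → ℝ => ∑ i ∈ s, v i) :=
      fun s => Finset.measurable_sum s (fun i _ => measurable_pi_apply i)
    have hsm2 : ∀ (s : Finset {x // x ∈ S₂}), Measurable (fun v : (i : S₂) → ℝ => ∑ i ∈ s, v i) :=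
      fun s => Finset.measurable_sum s (fun i _ => measurable_pi_apply i)
    have hM₁meas : MeasurableSet M₁ := by
      have : M₁ = (⋂ j ∈ Set.Iio k,
          {v : (i : S₁) → ℝ |
            (∑ i ∈ Finset.univ.filter (fun i : S₁ => (i : Fin n).castSucc < j), v i) ≤ a})
          ∩ {v : (i : S₁) → ℝ | a < ∑ i, v i} := by
        ext v
        simp [hM₁, Set.mem_iInter]
      rw [this]
      exact (MeasurableSet.biInter (Set.to_countable _)
        (fun j _ => measurableSet_le (hsm _) measurable_const)).inter
        (measurableSet_lt measurable_const (hsm _))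
    have hM₂meas : MeasurableSet M₂ := measurableSet_le measurable_const (hsm2 _)
    have hA : A k = (fun ω (i : S₁) => D i ω) ⁻¹' M₁ := by
      ext ω
      constructor
      · rintro ⟨h1, h2⟩
        refine ⟨fun j hj => ?_, ?_⟩
        · rw [key1 ω j hj.le]
          exact h1 j hj
        · rw [key2 ω]
          exact h2
      · rintro ⟨h1, h2⟩
        refine ⟨fun j hj => ?_, ?_⟩
        · rw [← key1 ω j hj.le]
          exact h1 j hj
        · rw [← key2 ω]
          exact h2
    have hB : B k = (fun ω (i : S₂) => D i ω) ⁻¹' M₂ := by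
      ext ω
      constructor
      · intro h
        show (0:ℝ) ≤ _
        rw [key3 ω]
        exact h
      · intro h
        show (0:ℝ) ≤ _
        rw [← key3 ω]
        exact h
    rw [hA, hB]
    exact hIF.measure_inter_preimage_eq_mul M₁ M₂ hM₁meas hM₂meas
  -- assembly
  have hmain : P (⋃ k, A k) ≤ 2 * P {ω | a ≤ X (Fin.last n) ω} := by
    rw [measure_iUnion hdisj hAmeas, tsum_fintype]
    have step1 : ∀ k, P (A k) ≤ 2 * P (A k ∩ B k) := by
      intro k
      rw [hindep k]
      calc P (A k) = 2 * (2⁻¹ * P (A k)) := by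
            rw [← mul_assoc, ENNReal.mul_inv_cancel (by norm_num) (by norm_num), one_mul]
        _ ≤ 2 * (P (A k) * P (B k)) := by
            refine mul_le_mul_right ?_ 2
            rw [mul_comm]
            exact mul_le_mul_right (hhalf k) _
    calc ∑ k, P (A k) ≤ ∑ k, 2 * P (A k ∩ B k) := Finset.sum_le_sum (fun k _ => step1 k)
      _ = 2 * ∑ k, P (A k ∩ B k) := by rw [Finset.mul_sum]
      _ = 2 * P (⋃ k, A k ∩ B k) := by
          rw [measure_iUnion ?_ (fun k => (hAmeas k).inter (hBmeas k)), tsum_fintype]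
          intro k k' hne
          exact Disjoint.mono Set.inter_subset_left Set.inter_subset_left (hdisj hne)
      _ ≤ 2 * P {ω | a ≤ X (Fin.last n) ω} := by
          refine mul_le_mul_right (measure_mono ?_) 2
          exact Set.iUnion_subset hABsub
  calc P {ω | ∃ i, a < W (t i) ω - W (t 0) ω} = P (⋃ k, A k) := by rw [← hU]
    _ ≤ 2 * P {ω | a ≤ X (Fin.last n) ω} := hmain

/-- If a.s. there is some `τ ∈ [0,T]` with `g_τ(ω) ≤ -K` (`K > 0`), then the process
`g_t + ζ W_t` reaches the level `0` from above within `[0,T]` with probability at least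
`erf(K / (ζ√(2T)))` (the probability of a possibly non-measurable event being
interpreted via the outer measure). -/
theorem drift_plus_scaled_brownian_reaches_zero {Ω : Type*} [MeasurableSpace Ω]
    (P : Measure Ω) [IsProbabilityMeasure P] (W : ℝ → Ω → ℝ)
    (hW : IsStdBrownianMotion P W) (T ζ K : ℝ) (hT : 0 < T) (hζ : 0 < ζ)
    (hK : 0 < K) (g : ℝ → Ω → ℝ)
    (hg : ∀ᵐ ω ∂P, ∃ τ ∈ Set.Icc (0:ℝ) T, g τ ω ≤ -K) :
    ENNReal.ofReal (erf (K / (ζ * Real.sqrt (2 * T)))) ≤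
      P {ω | ∃ t ∈ Set.Icc (0:ℝ) T, g t ω + ζ * W t ω ≤ 0} := by
  classical
  set a : ℝ := K / ζ with ha_def
  have ha : 0 < a := div_pos hK hζ
  have hz : K / (ζ * Real.sqrt (2 * T)) = a / Real.sqrt (2 * T) := by
    rw [ha_def, div_div]
  -- countable dense set
  set Dset : Set ℝ := insert T {x : ℝ | x ∈ Set.Icc 0 T ∧ ∃ q : ℚ, (q : ℝ) = x} with hDset
  have hDcount : Dset.Countable := by
    refine (Set.Countable.mono ?_ (Set.countable_range ((↑) : ℚ → ℝ))).insert T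
    rintro x ⟨-, q, hq⟩
    exact ⟨q, hq⟩
  have hDsub : Dset ⊆ Set.Icc 0 T := by
    rintro x (rfl | ⟨hx, -⟩)
    · exact ⟨hT.le, le_refl _⟩
    · exact hx
  obtain ⟨e, hDe⟩ := hDcount.exists_eq_range ⟨T, Set.mem_insert _ _⟩
  have he_mem : ∀ m, e m ∈ Set.Icc (0:ℝ) T := fun m => hDsub (hDe ▸ Set.mem_range_self m)
  -- finite approximations
  set F : ℕ → Finset ℝ := fun m => insert (0:ℝ) (insert T ((Finset.range m).image e)) with hF
  have hF0 : ∀ m, (0:ℝ) ∈ F m := fun m => Finset.mem_insert_self _ _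
  have hFT : ∀ m, T ∈ F m := fun m => Finset.mem_insert_of_mem (Finset.mem_insert_self _ _)
  have hFsub : ∀ m, ∀ x ∈ F m, x ∈ Set.Icc (0:ℝ) T := by
    intro m x hx
    rcases Finset.mem_insert.mp hx with rfl | hx
    · exact ⟨le_refl _, hT.le⟩
    rcases Finset.mem_insert.mp hx with rfl | hx
    · exact ⟨hT.le, le_refl _⟩
    obtain ⟨i, -, rfl⟩ := Finset.mem_image.mp hx
    exact he_mem i
  set U : ℕ → Set Ω := fun m => {ω | ∃ q ∈ F m, a < W q ω - W 0 ω} with hU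
  have hUmeas : ∀ m, MeasurableSet (U m) := by
    intro m
    have : U m = ⋃ q ∈ F m, {ω | a < W q ω - W 0 ω} := by
      ext ω; simp [hU]
    rw [this]
    exact (F m).measurableSet_biUnion
      (fun q _ => measurableSet_lt measurable_const ((hW.meas q).sub (hW.meas 0)))
  have hUmono : Monotone U := by
    intro m m' hm ω hω
    obtain ⟨q, hq, hq2⟩ := hω
    refine ⟨q, ?_, hq2⟩
    rcases Finset.mem_insert.mp hq with rfl | hq
    · exact hF0 m'
    rcases Finset.mem_insert.mp hq with rfl | hq
    · exact hFT m'
    obtain ⟨i, hi, rfl⟩ := Finset.mem_image.mp hq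
    exact Finset.mem_insert_of_mem (Finset.mem_insert_of_mem
      (Finset.mem_image.mpr ⟨i, Finset.mem_range.mpr
        (lt_of_lt_of_le (Finset.mem_range.mp hi) hm), rfl⟩))
  set p : ℝ≥0∞ := gaussianReal 0 T.toNNReal (Set.Ici a) with hp
  -- bound on finite approximations via Lévy
  have hUm_le : ∀ m, P (U m) ≤ 2 * p := by
    intro m
    have hcard : (F m).card = ((F m).card - 1) + 1 := by
      have : 0 < (F m).card := Finset.card_pos.mpr ⟨0, hF0 m⟩
      omega
    set n := (F m).card - 1 with hn
    set t : Fin (n+1) → ℝ := fun i => ((F m).orderIsoOfFin hcard i : ℝ) with ht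
    have htmem : ∀ i, t i ∈ Set.Icc (0:ℝ) T := fun i =>
      hFsub m _ ((F m).orderIsoOfFin hcard i).2
    have htmono : Monotone t := fun i j hij =>
      Subtype.coe_le_coe.mpr (((F m).orderIsoOfFin hcard).monotone hij)
    have htnn : ∀ i, 0 ≤ t i := fun i => (htmem i).1
    have hsurj : ∀ x ∈ F m, ∃ i, t i = x := by
      intro x hx
      obtain ⟨i, hi⟩ := ((F m).orderIsoOfFin hcard).surjective ⟨x, hx⟩
      exact ⟨i, by show ((((F m).orderIsoOfFin hcard) i : ℝ)) = x; rw [hi]⟩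
    have ht0 : t 0 = 0 := by
      obtain ⟨i, hi⟩ := hsurj 0 (hF0 m)
      have h1 : t 0 ≤ t i := htmono (Fin.zero_le i)
      rw [hi] at h1
      exact le_antisymm h1 (htnn 0)
    have htlast : t (Fin.last n) = T := by
      obtain ⟨i, hi⟩ := hsurj T (hFT m)
      have h1 : t i ≤ t (Fin.last n) := htmono (Fin.le_last i)
      rw [hi] at h1
      exact le_antisymm (htmem _).2 h1
    have hlev := levy P W hW n t htnn htmono a
    have hsub1 : U m ⊆ {ω | ∃ i, a < W (t i) ω - W (t 0) ω} := by
      rintro ω ⟨q, hq, hq2⟩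
      obtain ⟨i, rfl⟩ := hsurj q hq
      exact ⟨i, by rw [ht0]; exact hq2⟩
    have hrhs : P {ω | a ≤ W (t (Fin.last n)) ω - W (t 0) ω} = p := by
      rw [htlast, ht0, hp]
      have hmap := hW.gauss_incr 0 T (le_refl 0) hT.le
      rw [sub_zero] at hmap
      rw [← hmap, Measure.map_apply (f := fun ω => W T ω - W 0 ω) ((hW.meas T).sub (hW.meas 0)) measurableSet_Ici]
      rfl
    calc P (U m) ≤ P {ω | ∃ i, a < W (t i) ω - W (t 0) ω} := measure_mono hsub1
      _ ≤ 2 * P {ω | a ≤ W (t (Fin.last n)) ω - W (t 0) ω} := hlev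
      _ = 2 * p := by rw [hrhs]
  -- the union
  set V : Set Ω := ⋃ m, U m with hV
  have hVmeas : MeasurableSet V := MeasurableSet.iUnion hUmeas
  have hPV : P V ≤ 2 * p := by
    rw [hV, Directed.measure_iUnion hUmono.directed_le]
    exact iSup_le hUm_le
  -- containment
  have hsub : ∀ ω, ((∃ τ ∈ Set.Icc (0:ℝ) T, g τ ω ≤ -K) ∧
      ContinuousOn (fun t => W t ω) (Set.Ici (0:ℝ)) ∧ W 0 ω = 0) →
      ω ∉ V → ∃ t ∈ Set.Icc (0:ℝ) T, g t ω + ζ * W t ω ≤ 0 := by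
    rintro ω ⟨⟨τ, hτ, hτ2⟩, hcont, hinit⟩ hωV
    have hbound : ∀ q ∈ Dset, W q ω ≤ a := by
      intro q hq
      rw [hDe] at hq
      obtain ⟨m, rfl⟩ := hq
      by_contra hcon
      push_neg at hcon
      refine hωV (Set.mem_iUnion.mpr ⟨m+1, ⟨e m, ?_, ?_⟩⟩)
      · exact Finset.mem_insert_of_mem (Finset.mem_insert_of_mem
          (Finset.mem_image.mpr ⟨m, Finset.mem_range.mpr (Nat.lt_succ_self m), rfl⟩))
      · rw [hinit]; linarith
    have hallt : ∀ s ∈ Set.Icc (0:ℝ) T, W s ω ≤ a := by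
      rintro s ⟨hs0, hsT⟩
      by_contra hcon
      push_neg at hcon
      rcases eq_or_lt_of_le hsT with rfl | hsT'
      · exact absurd (hbound s (Set.mem_insert _ _)) (not_le.mpr hcon)
      · -- s < T, use continuity and rationals
        have hcw : ContinuousWithinAt (fun t => W t ω) (Set.Ici 0) s := hcont s hs0
        have hev : ∀ᶠ u in nhdsWithin s (Set.Ici 0), a < W u ω :=
          hcw.eventually (eventually_gt_nhds hcon)
        have hle : nhdsWithin s (Set.Ioi s) ≤ nhdsWithin s (Set.Ici 0) :=
          nhdsWithin_mono s (fun u hu => le_trans hs0 (le_of_lt hu))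
        have hev2 : ∀ᶠ u in nhdsWithin s (Set.Ioi s), a < W u ω := hle hev
        have hev3 : ∀ᶠ u in nhdsWithin s (Set.Ioi s), u < T :=
          hle (eventually_nhdsWithin_of_eventually_nhds (eventually_lt_nhds hsT'))
        obtain ⟨u, hu, hIoo⟩ := (mem_nhdsGT_iff_exists_Ioo_subset).mp
          ((hev2.and hev3).filter_mono le_rfl)
        obtain ⟨q, hq1, hq2⟩ := exists_rat_btwn (Set.mem_Ioi.mp hu)
        have hqmem : (q : ℝ) ∈ Set.Ioo s u := ⟨hq1, hq2⟩
        obtain ⟨hWq, hqT⟩ := hIoo hqmem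
        have hqD : (q : ℝ) ∈ Dset := by
          refine Set.mem_insert_of_mem _ ⟨⟨le_trans hs0 hq1.le, hqT.le⟩, q, rfl⟩
        exact absurd (hbound _ hqD) (not_le.mpr hWq)
    refine ⟨τ, hτ, ?_⟩
    have hWτ : W τ ω ≤ a := hallt τ hτ
    have : ζ * W τ ω ≤ ζ * a := mul_le_mul_of_nonneg_left hWτ hζ.le
    rw [ha_def, mul_div_cancel₀ _ hζ.ne'] at this
    linarith
  -- conclude
  have hgood : ∀ᵐ ω ∂P, ω ∈ Vᶜ → ω ∈ {ω | ∃ t ∈ Set.Icc (0:ℝ) T, g t ω + ζ * W t ω ≤ 0} := by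
    filter_upwards [hg, hW.cont, hW.init] with ω h1 h2 h3 h4
    exact hsub ω ⟨h1, h2, h3⟩ h4
  have hcompl : P Vᶜ ≤ P {ω | ∃ t ∈ Set.Icc (0:ℝ) T, g t ω + ζ * W t ω ≤ 0} :=
    measure_mono_ae hgood
  have hPVc : P Vᶜ = 1 - P V := prob_compl_eq_one_sub hVmeas
  have herf := erf_add_two_tail_le T a hT ha
  have h2p_ne_top : 2 * p ≠ ⊤ :=
    ENNReal.mul_ne_top (by norm_num) (measure_ne_top _ _)
  calc ENNReal.ofReal (erf (K / (ζ * Real.sqrt (2 * T))))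
      = ENNReal.ofReal (erf (a / Real.sqrt (2 * T))) := by rw [hz]
    _ ≤ 1 - 2 * p := ENNReal.le_sub_of_add_le_right h2p_ne_top herf
    _ ≤ 1 - P V := tsub_le_tsub_left hPV 1
    _ = P Vᶜ := hPVc.symm
    _ ≤ _ := hcompl
end

section
/- Fixed-time convergence of the comparison function: let c₁ > 0, c₂ > 0, γ₁ ∈ (0, 1), γ₂ > 1, and let W : [0, ∞) → ℝ be differentiable with derivative satisfying W′(t) ≤ −c₁·W(t)^{γ₁} − c₂·W(t)^{γ₂} at every t for which W(t) > 0. Then W(t) ≤ 0 for all t ≥ T_g, where T_g = 1/(c₁(1 − γ₁)) + 1/(c₂(γ₂ − 1)); in particular the settling time is bounded by T_g uniformly in the initial value W(0). -/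
/-- Deterministic fixed-time stability comparison lemma: if `c₁, c₂ > 0`,
`γ₁ ∈ (0,1)`, `γ₂ > 1`, and `W : [0,∞) → ℝ` is differentiable with
`W'(t) ≤ -c₁ W(t)^{γ₁} - c₂ W(t)^{γ₂}` whenever `W(t) > 0`, then `W(t) ≤ 0` for
all `t ≥ T_g = 1/(c₁(1-γ₁)) + 1/(c₂(γ₂-1))`, uniformly in the initial value. -/
theorem fixed_time_comparison_lemma (c₁ c₂ γ₁ γ₂ : ℝ) (hc₁ : 0 < c₁) (hc₂ : 0 < c₂)
    (hγ₁ : γ₁ ∈ Set.Ioo (0 : ℝ) 1) (hγ₂ : 1 < γ₂) (W : ℝ → ℝ)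
    (hdiff : ∀ t : ℝ, 0 ≤ t → DifferentiableAt ℝ W t)
    (hderiv : ∀ t : ℝ, 0 ≤ t → 0 < W t →
      deriv W t ≤ -c₁ * W t ^ γ₁ - c₂ * W t ^ γ₂) :
    ∀ t : ℝ, 1 / (c₁ * (1 - γ₁)) + 1 / (c₂ * (γ₂ - 1)) ≤ t → W t ≤ 0 := by
  obtain ⟨hγ₁0, hγ₁1⟩ := hγ₁
  have h1γ₁ : 0 < 1 - γ₁ := by linarith
  have hγ₂1 : 0 < γ₂ - 1 := by linarith
  set T₂ : ℝ := 1 / (c₁ * (1 - γ₁)) with hT₂def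
  set T₁ : ℝ := 1 / (c₂ * (γ₂ - 1)) with hT₁def
  have hT₂pos : 0 < T₂ := by positivity
  have hT₁pos : 0 < T₁ := by positivity
  set Tg : ℝ := T₂ + T₁ with hTgdef
  have hTgpos : 0 < Tg := by positivity
  -- derivative is negative whenever W is positive
  have hderivneg : ∀ s : ℝ, 0 ≤ s → 0 < W s → deriv W s < 0 := by
    intro s hs hW
    have h1 : 0 < c₁ * W s ^ γ₁ := by positivity
    have h2 : 0 < c₂ * W s ^ γ₂ := by positivity
    have := hderiv s hs hW
    linarith
  -- invariance: once nonpositive, stays nonpositive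
  have hinv : ∀ s u : ℝ, 0 ≤ s → s ≤ u → W s ≤ 0 → W u ≤ 0 := by
    intro s u hs hsu hWs
    by_contra hWu
    push_neg at hWu
    have hsu' : s < u := lt_of_le_of_ne hsu (by rintro rfl; linarith)
    set S : Set ℝ := {x ∈ Set.Icc s u | W x ≤ 0} with hSdef
    have hScont : ContinuousOn W (Set.Icc s u) := fun x hx =>
      (hdiff x (hs.trans hx.1)).continuousAt.continuousWithinAt
    have hSclosed : IsClosed S := by
      have := hScont.preimage_isClosed_of_isClosed isClosed_Icc (isClosed_Iic (a := (0:ℝ)))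
      simpa [hSdef, Set.preimage, Set.inter_def] using this
    have hSne : S.Nonempty := ⟨s, ⟨le_refl s, hsu⟩, hWs⟩
    have hSbdd : BddAbove S := ⟨u, fun x hx => hx.1.2⟩
    have hrS : sSup S ∈ S := hSclosed.csSup_mem hSne hSbdd
    have hrIcc : sSup S ∈ Set.Icc s u := hrS.1
    have hWr : W (sSup S) ≤ 0 := hrS.2
    have hru : sSup S < u := lt_of_le_of_ne hrIcc.2 (fun h => by rw [h] at hWr; linarith)
    have hpos : ∀ x ∈ Set.Ioc (sSup S) u, 0 < W x := by
      intro x hx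
      by_contra hx'
      push_neg at hx'
      have hxS : x ∈ S := ⟨⟨hrIcc.1.trans hx.1.le, hx.2⟩, hx'⟩
      exact absurd (le_csSup hSbdd hxS) (not_le.mpr hx.1)
    have hanti : AntitoneOn W (Set.Icc (sSup S) u) := by
      apply antitoneOn_of_deriv_nonpos (convex_Icc (sSup S) u)
      · exact fun x hx => (hdiff x ((hs.trans hrIcc.1).trans hx.1)).continuousAt.continuousWithinAt
      · rw [interior_Icc]
        exact fun x hx => (hdiff x ((hs.trans hrIcc.1).trans hx.1.le)).differentiableWithinAt
      · rw [interior_Icc]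
        intro x hx
        exact (hderivneg x ((hs.trans hrIcc.1).trans hx.1.le)
          (hpos x ⟨hx.1, hx.2.le⟩)).le
    have := hanti (Set.left_mem_Icc.mpr hru.le) (Set.right_mem_Icc.mpr hru.le) hru.le
    linarith
  -- existence of a time in [0, Tg] where W is nonpositive
  have hex : ∃ s ∈ Set.Icc (0:ℝ) Tg, W s ≤ 0 := by
    by_contra hcon
    push_neg at hcon
    have hpos : ∀ x ∈ Set.Icc (0:ℝ) Tg, 0 < W x := hcon
    have hanti : AntitoneOn W (Set.Icc (0:ℝ) Tg) := by
      apply antitoneOn_of_deriv_nonpos (convex_Icc 0 Tg)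
      · exact fun x hx => (hdiff x hx.1).continuousAt.continuousWithinAt
      · rw [interior_Icc]
        exact fun x hx => (hdiff x hx.1.le).differentiableWithinAt
      · rw [interior_Icc]
        exact fun x hx => (hderivneg x hx.1.le (hpos x ⟨hx.1.le, hx.2.le⟩)).le
    have hT₁Icc : T₁ ∈ Set.Icc (0:ℝ) Tg := ⟨hT₁pos.le, by simp [hTgdef]; linarith⟩
    -- Step A : W T₁ ≤ 1
    have hWT₁ : W T₁ ≤ 1 := by
      by_contra hA
      push_neg at hA
      have hgt : ∀ x ∈ Set.Icc (0:ℝ) T₁, 1 < W x := by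
        intro x hx
        have : W T₁ ≤ W x := hanti ⟨hx.1, hx.2.trans hT₁Icc.2⟩ hT₁Icc hx.2
        linarith
      set u : ℝ → ℝ := fun x => W x ^ (1 - γ₂) with hudef
      have key := Convex.mul_sub_le_image_sub_of_le_deriv (convex_Icc 0 T₁) (f := u)
        (C := c₂ * (γ₂ - 1)) ?_ ?_ ?_ 0 (Set.left_mem_Icc.mpr hT₁pos.le) T₁
        (Set.right_mem_Icc.mpr hT₁pos.le) hT₁pos.le
      · have hu0 : 0 < u 0 := Real.rpow_pos_of_pos (by linarith [hgt 0 (Set.left_mem_Icc.mpr hT₁pos.le)]) _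
        have huT₁ : u T₁ < 1 :=
          Real.rpow_lt_one_of_one_lt_of_neg (hgt T₁ (Set.right_mem_Icc.mpr hT₁pos.le)) (by linarith)
        have hCT : c₂ * (γ₂ - 1) * (T₁ - 0) = 1 := by
          rw [hT₁def]; field_simp; ring
        rw [hCT] at key
        linarith
      · exact fun x hx => ((hdiff x hx.1).rpow_const
          (Or.inl (by linarith [hgt x hx]))).continuousAt.continuousWithinAt
      · rw [interior_Icc]
        exact fun x hx => ((hdiff x hx.1.le).rpow_const
          (Or.inl (by linarith [hgt x ⟨hx.1.le, hx.2.le⟩]))).differentiableWithinAt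
      · rw [interior_Icc]
        intro x hx
        have hx0 : (0:ℝ) ≤ x := hx.1.le
        have hWx : 1 < W x := hgt x ⟨hx.1.le, hx.2.le⟩
        have hWxpos : 0 < W x := by linarith
        rw [hudef, deriv_rpow_const (hdiff x hx0) (Or.inl (ne_of_gt hWxpos))]
        have hd : deriv W x ≤ -(c₂ * W x ^ γ₂) := by
          have h1 : 0 < c₁ * W x ^ γ₁ := by positivity
          have := hderiv x hx0 hWxpos
          linarith
        have hexp : 0 < W x ^ (1 - γ₂ - 1) := Real.rpow_pos_of_pos hWxpos _
        have hmul : (-(c₂ * W x ^ γ₂)) * (1 - γ₂) * W x ^ (1 - γ₂ - 1)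
            ≤ deriv W x * (1 - γ₂) * W x ^ (1 - γ₂ - 1) := by
          have h2 : deriv W x * (1 - γ₂) ≥ (-(c₂ * W x ^ γ₂)) * (1 - γ₂) :=
            mul_le_mul_of_nonpos_right hd (by linarith)
          exact mul_le_mul_of_nonneg_right h2 hexp.le
        have hcomb : (-(c₂ * W x ^ γ₂)) * (1 - γ₂) * W x ^ (1 - γ₂ - 1) = c₂ * (γ₂ - 1) := by
          have : W x ^ γ₂ * W x ^ (1 - γ₂ - 1) = W x ^ (γ₂ + (1 - γ₂ - 1)) :=
            (Real.rpow_add hWxpos _ _).symm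
          have h0 : W x ^ γ₂ * W x ^ (1 - γ₂ - 1) = 1 := by
            rw [this]; norm_num
          linear_combination (c₂ * (γ₂ - 1)) * h0
        linarith [hmul, hcomb.symm.le]
    -- Step B : contradiction on [T₁, Tg]
    have hle1 : ∀ x ∈ Set.Icc T₁ Tg, W x ≤ 1 := by
      intro x hx
      have : W x ≤ W T₁ := hanti hT₁Icc ⟨hT₁pos.le.trans hx.1, hx.2⟩ hx.1
      linarith
    have hposB : ∀ x ∈ Set.Icc T₁ Tg, 0 < W x := fun x hx =>
      hpos x ⟨hT₁pos.le.trans hx.1, hx.2⟩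
    set v : ℝ → ℝ := fun x => W x ^ (1 - γ₁) with hvdef
    have hT₁Tg : T₁ ≤ Tg := by simp [hTgdef]; linarith
    have key := Convex.image_sub_le_mul_sub_of_deriv_le (convex_Icc T₁ Tg) (f := v)
      (C := -(c₁ * (1 - γ₁))) ?_ ?_ ?_ T₁ (Set.left_mem_Icc.mpr hT₁Tg) Tg
      (Set.right_mem_Icc.mpr hT₁Tg) hT₁Tg
    · have hvTg : 0 < v Tg :=
        Real.rpow_pos_of_pos (hposB Tg (Set.right_mem_Icc.mpr hT₁Tg)) _
      have hvT₁ : v T₁ ≤ 1 :=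
        Real.rpow_le_one (hposB T₁ (Set.left_mem_Icc.mpr hT₁Tg)).le hWT₁ h1γ₁.le
      have hCT : -(c₁ * (1 - γ₁)) * (Tg - T₁) = -1 := by
        have : Tg - T₁ = T₂ := by simp [hTgdef]
        rw [this, hT₂def]; field_simp
      rw [hCT] at key
      linarith
    · exact fun x hx => ((hdiff x (hT₁pos.le.trans hx.1)).rpow_const
        (Or.inl (ne_of_gt (hposB x hx)))).continuousAt.continuousWithinAt
    · rw [interior_Icc]
      exact fun x hx => ((hdiff x (hT₁pos.le.trans hx.1.le)).rpow_const
        (Or.inl (ne_of_gt (hposB x ⟨hx.1.le, hx.2.le⟩)))).differentiableWithinAt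
    · rw [interior_Icc]
      intro x hx
      have hx0 : (0:ℝ) ≤ x := hT₁pos.le.trans hx.1.le
      have hWxpos : 0 < W x := hposB x ⟨hx.1.le, hx.2.le⟩
      rw [hvdef, deriv_rpow_const (hdiff x hx0) (Or.inl (ne_of_gt hWxpos))]
      have hd : deriv W x ≤ -(c₁ * W x ^ γ₁) := by
        have h2 : 0 < c₂ * W x ^ γ₂ := by positivity
        have := hderiv x hx0 hWxpos
        linarith
      have hexp : 0 < W x ^ (1 - γ₁ - 1) := Real.rpow_pos_of_pos hWxpos _
      have hcomb : (-(c₁ * W x ^ γ₁)) * (1 - γ₁) * W x ^ (1 - γ₁ - 1) = -(c₁ * (1 - γ₁)) := by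
        have h0 : W x ^ γ₁ * W x ^ (1 - γ₁ - 1) = 1 := by
          rw [← Real.rpow_add hWxpos]; norm_num
        linear_combination (-(c₁ * (1 - γ₁))) * h0
      have hmul : deriv W x * (1 - γ₁) * W x ^ (1 - γ₁ - 1)
          ≤ (-(c₁ * W x ^ γ₁)) * (1 - γ₁) * W x ^ (1 - γ₁ - 1) :=
        mul_le_mul_of_nonneg_right (mul_le_mul_of_nonneg_right hd h1γ₁.le) hexp.le
      linarith [hmul, hcomb.le]
  -- conclude
  intro t ht
  obtain ⟨s, hsIcc, hWs⟩ := hex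
  exact hinv s t hsIcc.1 (hsIcc.2.trans ht) hWs
end
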